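/- arXiv:0912.2923 — 12 statements merged into one kernel-verified Lean document; each statement's English description precedes it below -/
import Mathlib

section
/- Let χ be an integer and let a be a positive even integer. Then the coefficient of t^a in the formal power series M(t)^{2χ} is congruent modulo 4 to (−1)^{a/2} times the coefficient of t^{a/2} in M(t)^{χ}. -/
open PowerSeries Finset

/-- The unit `1 - (ε t)^(n+1)` of `ℤ⟦t⟧`. -/
noncomputable def oneSubUnit (ε : ℤ) (n : ℕ) : (PowerSeries ℤ)ˣ :=
  IsUnit.unit (a := (1 : PowerSeries ℤ) - (PowerSeries.C ε * PowerSeries.X) ^ (n + 1))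
    (by
      rw [PowerSeries.isUnit_iff_constantCoeff]
      simp)

/-- The coefficient of `t^a` in `M(ε t)^m`, where `M` is the MacMahon function
`M(t) = ∏_{n ≥ 1} (1 - t^n)^{-n}` and the (integer) power is taken in the group of units
of `ℤ⟦t⟧`.  Since the factor `(1 - (ε t)^n)^{-n m}` is `1 + O(t^n)`, only the factors with
`1 ≤ n ≤ a` affect the coefficient of `t^a`, so the coefficient of the infinite product
equals the corresponding coefficient of the finite product over `1 ≤ n ≤ a`. -/
noncomputable def macMahonPowCoeff (ε m : ℤ) (a : ℕ) : ℤ :=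
  PowerSeries.coeff a
    ↑(∏ n ∈ Finset.range a, (oneSubUnit ε n) ^ (-(((n : ℤ) + 1) * m)))

noncomputable abbrev R4 : Type := ZMod 4

/-- The "substitute `-t^2` for `t`" map on coefficients. -/
noncomputable def sigmaFun (f : R4⟦X⟧) : R4⟦X⟧ :=
  PowerSeries.mk fun k => if Even k then (-1) ^ (k / 2) * PowerSeries.coeff (k / 2) f else 0

lemma sigmaFun_coeff (f : R4⟦X⟧) (k : ℕ) :
    PowerSeries.coeff k (sigmaFun f) =
      if Even k then (-1) ^ (k / 2) * PowerSeries.coeff (k / 2) f else 0 :=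
  PowerSeries.coeff_mk _ _

lemma sigmaFun_coeff_odd (f : R4⟦X⟧) (k : ℕ) (hk : ¬ Even k) :
    PowerSeries.coeff k (sigmaFun f) = 0 := by
  rw [sigmaFun_coeff, if_neg hk]

lemma sigmaFun_coeff_even (f : R4⟦X⟧) (c : ℕ) :
    PowerSeries.coeff (2 * c) (sigmaFun f) = (-1) ^ c * PowerSeries.coeff c f := by
  rw [sigmaFun_coeff, if_pos ⟨c, two_mul c⟩, Nat.mul_div_cancel_left c (by norm_num)]

lemma sigmaFun_mul (f g : R4⟦X⟧) : sigmaFun (f * g) = sigmaFun f * sigmaFun g := by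
  ext k
  rcases Nat.even_or_odd k with hk | hk
  · obtain ⟨c, hc⟩ := hk
    have hk2 : k = 2 * c := by omega
    subst hk2
    rw [sigmaFun_coeff_even, PowerSeries.coeff_mul, PowerSeries.coeff_mul, Finset.mul_sum]
    -- restrict RHS-style sum to pairs with both components even
    have hzero : ∀ p ∈ Finset.HasAntidiagonal.antidiagonal (2 * c),
        PowerSeries.coeff p.1 (sigmaFun f) * PowerSeries.coeff p.2 (sigmaFun g) ≠ 0 →
        Even p.1 := by
      intro p hp hpe
      by_contra hodd
      exact hpe (by rw [sigmaFun_coeff_odd _ _ hodd, zero_mul])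
    rw [show (∑ p ∈ Finset.HasAntidiagonal.antidiagonal c,
        (-1) ^ c * (PowerSeries.coeff p.1 f * PowerSeries.coeff p.2 g)) =
        ∑ p ∈ (Finset.HasAntidiagonal.antidiagonal (2 * c)).filter (fun p => Even p.1),
          PowerSeries.coeff p.1 (sigmaFun f) * PowerSeries.coeff p.2 (sigmaFun g) from ?_,
      Finset.sum_filter_of_ne hzero]
    refine Finset.sum_nbij' (fun p => (2 * p.1, 2 * p.2)) (fun p => (p.1 / 2, p.2 / 2)) ?_ ?_ ?_ ?_ ?_
    · intro p hp
      simp only [Finset.HasAntidiagonal.mem_antidiagonal] at hp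
      simp only [Finset.mem_filter, Finset.HasAntidiagonal.mem_antidiagonal]
      exact ⟨by omega, ⟨p.1, by omega⟩⟩
    · intro p hp
      simp only [Finset.mem_filter, Finset.HasAntidiagonal.mem_antidiagonal] at hp
      obtain ⟨h1, c1, hc1⟩ := hp
      simp only [Finset.HasAntidiagonal.mem_antidiagonal]
      omega
    · rintro ⟨x, y⟩ hp
      simp only [Prod.mk.injEq]
      omega
    · rintro ⟨x, y⟩ hp
      simp only [Finset.mem_filter, Finset.HasAntidiagonal.mem_antidiagonal] at hp
      obtain ⟨h1, c1, hc1⟩ := hp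
      simp only [Prod.mk.injEq]
      omega
    · intro p hp
      simp only [Finset.HasAntidiagonal.mem_antidiagonal] at hp
      rw [sigmaFun_coeff, sigmaFun_coeff, if_pos ⟨p.1, two_mul p.1⟩, if_pos ⟨p.2, two_mul p.2⟩]
      have e1 : 2 * p.1 / 2 = p.1 := by omega
      have e2 : 2 * p.2 / 2 = p.2 := by omega
      rw [e1, e2, ← hp]
      ring
  · rw [sigmaFun_coeff_odd _ _ (by simpa using hk), PowerSeries.coeff_mul]
    refine (Finset.sum_eq_zero ?_).symm
    intro p hp
    simp only [Finset.HasAntidiagonal.mem_antidiagonal] at hp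
    rcases Nat.even_or_odd p.1 with h1 | h1
    · have h2 : ¬ Even p.2 := by
        intro h2
        exact (by simpa using hk : ¬ Even k) (hp ▸ h1.add h2)
      rw [sigmaFun_coeff_odd _ _ h2, mul_zero]
    · rw [sigmaFun_coeff_odd _ _ (by simpa using h1), zero_mul]

lemma sigmaFun_one : sigmaFun 1 = 1 := by
  ext k
  rw [sigmaFun_coeff]
  rcases Nat.eq_zero_or_pos k with h0 | h0
  · subst h0; simp
  rcases Nat.even_or_odd k with hk | hk
  · obtain ⟨c, hc⟩ := hk
    rw [if_pos ⟨c, hc⟩, PowerSeries.coeff_one, PowerSeries.coeff_one, if_neg (by omega),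
      if_neg (by omega), mul_zero]
  · obtain ⟨c, hc⟩ := hk
    rw [if_neg (by simp [Nat.even_iff, hc, Nat.add_mod]), PowerSeries.coeff_one,
      if_neg (by omega)]


lemma four_eq_zero : (4 : R4⟦X⟧) = 0 := by
  have : (4 : R4⟦X⟧) = (PowerSeries.C 4 : R4⟦X⟧) := (map_ofNat (PowerSeries.C (R := R4)) 4).symm
  rw [this, show (4 : R4) = 0 from rfl, map_zero]

/-- The geometric series `∑ k, X^(m k)`, inverse of `1 - X^m`. -/
noncomputable def geom (m : ℕ) : R4⟦X⟧ :=
  PowerSeries.mk fun k => if m ∣ k then 1 else 0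

lemma geom_mul (m : ℕ) (hm : 0 < m) : (1 - (X : R4⟦X⟧) ^ m) * geom m = 1 := by
  ext k
  rw [sub_mul, one_mul, map_sub, PowerSeries.coeff_one,
    show (X : R4⟦X⟧) ^ m * geom m = geom m * X ^ m from mul_comm _ _,
    PowerSeries.coeff_mul_X_pow']
  simp only [geom, PowerSeries.coeff_mk]
  have hiff : m ≤ k → (m ∣ k ↔ m ∣ k - m) := by
    intro hmk
    constructor
    · intro h; exact Nat.dvd_sub h dvd_rfl
    · intro h
      have := Nat.dvd_add h (dvd_refl m)
      rwa [Nat.sub_add_cancel hmk] at this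
  by_cases hk0 : k = 0
  · subst hk0
    rw [if_pos (dvd_zero m), if_neg (show ¬ m ≤ 0 by omega), if_pos rfl]
    norm_num
  · rw [if_neg hk0]
    by_cases hmk : m ≤ k
    · rw [if_pos hmk]
      by_cases hd : m ∣ k
      · rw [if_pos hd, if_pos ((hiff hmk).mp hd), sub_self]
      · rw [if_neg hd, if_neg (fun hh => hd ((hiff hmk).mpr hh)), sub_self]
    · rw [if_neg hmk, if_neg (fun hd => hmk (Nat.le_of_dvd (by omega) hd)), sub_zero]

/-- The map `ℤ⟦t⟧ → (ZMod 4)⟦t⟧`. -/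
noncomputable def Phi : PowerSeries ℤ →+* R4⟦X⟧ := PowerSeries.map (Int.castRingHom R4)

/-- The image of `oneSubUnit 1 n` in `(ZMod 4)⟦t⟧`. -/
noncomputable def U (n : ℕ) : R4⟦X⟧ˣ := Units.map Phi.toMonoidHom (oneSubUnit 1 n)

lemma U_val (n : ℕ) : (U n : R4⟦X⟧) = 1 - X ^ (n + 1) := by
  have h1 : (U n : R4⟦X⟧) = Phi ((oneSubUnit 1 n : (PowerSeries ℤ)ˣ) : PowerSeries ℤ) := rfl
  rw [h1, oneSubUnit, IsUnit.unit_spec, map_sub, map_one, map_pow, map_mul]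
  simp [Phi]

lemma sigma_one_sub_X_pow (m : ℕ) (hm : 0 < m) :
    sigmaFun (1 - X ^ m) = 1 - PowerSeries.C ((-1) ^ m : R4) * X ^ (2 * m) := by
  ext k
  rw [sigmaFun_coeff]
  simp only [map_sub, PowerSeries.coeff_one, PowerSeries.coeff_C_mul, PowerSeries.coeff_X_pow]
  rcases Nat.even_or_odd k with hk | hk
  · obtain ⟨c, hc⟩ := hk
    rw [if_pos ⟨c, hc⟩]
    have hk2 : k / 2 = c := by omega
    rw [hk2]
    by_cases hcm : c = m
    · subst hcm
      rw [if_neg (show ¬ c = 0 by omega), if_pos (show c = c from rfl),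
        if_neg (show ¬ k = 0 by omega), if_pos (show k = 2 * c by omega)]
      ring
    · rw [if_neg hcm, if_neg (show ¬ k = 2 * m by omega)]
      by_cases hc0 : c = 0
      · rw [if_pos hc0, if_pos (show k = 0 by omega), hc0]
        norm_num
      · rw [if_neg hc0, if_neg (show ¬ k = 0 by omega)]
        ring
  · obtain ⟨c, hc⟩ := hk
    rw [if_neg (by simp [Nat.even_iff, hc, Nat.add_mod]), if_neg (show ¬ k = 0 by omega),
      if_neg (show ¬ k = 2 * m by omega)]
    ring

/-- `t ↦ -t²` as a monoid hom. -/
noncomputable def sigma : R4⟦X⟧ →* R4⟦X⟧ :=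
  { toFun := sigmaFun, map_one' := sigmaFun_one, map_mul' := sigmaFun_mul }

noncomputable def sigmaU : R4⟦X⟧ˣ →* R4⟦X⟧ˣ := Units.map sigma

lemma sigmaU_val (u : R4⟦X⟧ˣ) : ((sigmaU u : R4⟦X⟧ˣ) : R4⟦X⟧) = sigmaFun (u : R4⟦X⟧) := rfl

/-- The correction unit. -/
noncomputable def w (n : ℕ) : R4⟦X⟧ˣ := sigmaU (U n) * (U n)⁻¹ * (U n)⁻¹

/-- The value of the inverse unit. -/
noncomputable def iU (n : ℕ) : R4⟦X⟧ := ((U n)⁻¹ : R4⟦X⟧ˣ)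

lemma U_mul_inv (n : ℕ) : (1 - (X : R4⟦X⟧) ^ (n + 1)) * iU n = 1 := by
  rw [iU, ← U_val, ← Units.val_mul, mul_inv_cancel, Units.val_one]

lemma w_val_odd (n : ℕ) (h : ¬ Even (n + 1)) :
    ((w n : R4⟦X⟧ˣ) : R4⟦X⟧) = 1 + 2 * (X ^ (n + 1) * iU n ^ 2) := by
  have hval : ((w n : R4⟦X⟧ˣ) : R4⟦X⟧) =
      sigmaFun (U n : R4⟦X⟧) * iU n * iU n := rfl
  have hσ : sigmaFun ((U n : R4⟦X⟧ˣ) : R4⟦X⟧) = 1 + X ^ (2 * (n + 1)) := by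
    rw [U_val, sigma_one_sub_X_pow (n + 1) (by omega),
      (Nat.not_even_iff_odd.mp h).neg_one_pow]
    simp
  have hui := U_mul_inv n
  rw [hval, hσ]
  linear_combination ((1 - X ^ (n + 1)) * iU n + 1) * hui

lemma w_val_even (n : ℕ) (h : Even (n + 1)) :
    ((w n : R4⟦X⟧ˣ) : R4⟦X⟧) = 1 + 2 * (X ^ (n + 1) * iU n) := by
  have hval : ((w n : R4⟦X⟧ˣ) : R4⟦X⟧) =
      sigmaFun (U n : R4⟦X⟧) * iU n * iU n := rfl
  have hσ : sigmaFun ((U n : R4⟦X⟧ˣ) : R4⟦X⟧) = 1 - X ^ (2 * (n + 1)) := by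
    rw [U_val, sigma_one_sub_X_pow (n + 1) (by omega), h.neg_one_pow]
    simp
  have hui := U_mul_inv n
  rw [hval, hσ]
  linear_combination ((1 + X ^ (n + 1)) * iU n + 1) * hui

lemma w_val_exists (n : ℕ) : ∃ g, ((w n : R4⟦X⟧ˣ) : R4⟦X⟧) = 1 + 2 * g := by
  by_cases h : Even (n + 1)
  · exact ⟨_, w_val_even n h⟩
  · exact ⟨_, w_val_odd n h⟩

lemma w_mul_w (n : ℕ) : w n * w n = 1 := by
  obtain ⟨g, hg⟩ := w_val_exists n
  refine Units.ext ?_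
  rw [Units.val_mul, hg, Units.val_one]
  linear_combination (g + g ^ 2) * four_eq_zero

lemma zpow_of_involution {G : Type*} [Group G] (x : G) (h : x * x = 1) (z : ℤ) :
    x ^ z = if Even z then 1 else x := by
  have h2 : x ^ (2 : ℤ) = 1 := by rw [zpow_two, h]
  rcases Int.even_or_odd z with ⟨k, hk⟩ | ⟨k, hk⟩
  · rw [if_pos ⟨k, hk⟩, show z = 2 * k by omega, zpow_mul, h2, one_zpow]
  · rw [if_neg (by rw [Int.even_iff, hk]; omega), show z = 2 * k + 1 by omega, zpow_add,
      zpow_mul, h2, one_zpow, one_mul, zpow_one]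

/-- A unit is `1 + 2·(odd-supported)`. -/
def OddTwo (u : R4⟦X⟧ˣ) : Prop :=
  ∃ g, (u : R4⟦X⟧) = 1 + 2 * g ∧ ∀ k, Even k → PowerSeries.coeff k g = 0

lemma oddTwo_one : OddTwo 1 := ⟨0, by simp, by simp⟩

lemma oddTwo_mul {u v : R4⟦X⟧ˣ} (hu : OddTwo u) (hv : OddTwo v) : OddTwo (u * v) := by
  obtain ⟨g, hg, hgo⟩ := hu
  obtain ⟨g', hg', hgo'⟩ := hv
  refine ⟨g + g', ?_, ?_⟩
  · rw [Units.val_mul, hg, hg']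
    linear_combination (g * g') * four_eq_zero
  · intro k hk
    rw [map_add, hgo k hk, hgo' k hk, add_zero]

lemma two_mul_iU_sq (n : ℕ) :
    2 * ((X : R4⟦X⟧) ^ (n + 1) * iU n ^ 2) =
      2 * (X ^ (n + 1) * geom (2 * (n + 1))) := by
  have hui := U_mul_inv n
  have hg := geom_mul (2 * (n + 1)) (by omega)
  linear_combination (X ^ (n + 1) * 2 * geom (2 * (n + 1)) * ((1 - X ^ (n + 1)) * iU n + 1)) * hui
    + (-(X ^ (n + 1)) * 2 * iU n ^ 2) * hg
    + (X ^ (n + 1) * (X ^ (n + 1) - (X ^ (n + 1)) ^ 2) * geom (2 * (n + 1)) * iU n ^ 2)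
      * four_eq_zero

lemma coeff_X_mul_geom_even (n k : ℕ) (hn : ¬ Even (n + 1)) (hk : Even k) :
    PowerSeries.coeff k ((X : R4⟦X⟧) ^ (n + 1) * geom (2 * (n + 1))) = 0 := by
  rw [mul_comm, PowerSeries.coeff_mul_X_pow']
  by_cases hle : n + 1 ≤ k
  · rw [if_pos hle]
    simp only [geom, PowerSeries.coeff_mk]
    rw [if_neg]
    intro hdvd
    obtain ⟨t, ht⟩ := hdvd
    have heq : k - (n + 1) = (n + 1) * t + (n + 1) * t := by rw [ht]; ring
    have heven : Even (k - (n + 1)) := ⟨(n + 1) * t, heq⟩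
    have := (Nat.even_sub hle).mp heven
    rw [Nat.even_iff] at *
    omega
  · rw [if_neg hle]

lemma oddTwo_w_zpow (n : ℕ) (χ : ℤ) : OddTwo (w n ^ ((((n : ℕ) : ℤ) + 1) * χ)) := by
  rw [zpow_of_involution _ (w_mul_w n)]
  by_cases hc : Even ((((n : ℕ) : ℤ) + 1) * χ)
  · rw [if_pos hc]; exact oddTwo_one
  · rw [if_neg hc]
    have hodd : ¬ Even (n + 1) := by
      intro h
      exact hc (Even.mul_right (by exact_mod_cast (by exact_mod_cast h : Even ((n + 1 : ℕ) : ℤ))) χ)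
    refine ⟨X ^ (n + 1) * geom (2 * (n + 1)), ?_, fun k hk => coeff_X_mul_geom_even n k hodd hk⟩
    rw [w_val_odd n hodd, two_mul_iU_sq]

/-- The subgroup of units congruent to `1` modulo `X^N`. -/
noncomputable def GN (N : ℕ) : Subgroup R4⟦X⟧ˣ where
  carrier := {u | (X : R4⟦X⟧) ^ N ∣ (u : R4⟦X⟧) - 1}
  one_mem' := by simp
  mul_mem' := by
    rintro u v hu hv
    have h : ((u * v : R4⟦X⟧ˣ) : R4⟦X⟧) - 1 = (u : R4⟦X⟧) * ((v : R4⟦X⟧) - 1) + ((u : R4⟦X⟧) - 1) := by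
      rw [Units.val_mul]; ring
    show (X : R4⟦X⟧) ^ N ∣ _
    rw [h]
    exact dvd_add (hv.mul_left _) hu
  inv_mem' := by
    intro u hu
    have h1 : ((u⁻¹ : R4⟦X⟧ˣ) : R4⟦X⟧) * (u : R4⟦X⟧) = 1 := by
      rw [← Units.val_mul, inv_mul_cancel, Units.val_one]
    have h : ((u⁻¹ : R4⟦X⟧ˣ) : R4⟦X⟧) - 1 = -(((u⁻¹ : R4⟦X⟧ˣ) : R4⟦X⟧) * ((u : R4⟦X⟧) - 1)) := by
      linear_combination h1
    show (X : R4⟦X⟧) ^ N ∣ _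
    rw [h]
    exact dvd_neg.mpr (hu.mul_left _)

lemma coeff_mul_GN (b : ℕ) (f : R4⟦X⟧) (u : R4⟦X⟧ˣ) (hu : u ∈ GN (b + 1)) :
    PowerSeries.coeff b (f * (u : R4⟦X⟧)) = PowerSeries.coeff b f := by
  have hsplit : f * (u : R4⟦X⟧) = f + f * ((u : R4⟦X⟧) - 1) := by ring
  rw [hsplit, map_add]
  have hdvd : (X : R4⟦X⟧) ^ (b + 1) ∣ f * ((u : R4⟦X⟧) - 1) :=
    Dvd.dvd.mul_left hu f
  rw [PowerSeries.X_pow_dvd_iff.mp hdvd b (by omega), add_zero]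

noncomputable def Pprod (m : ℤ) (N : ℕ) : R4⟦X⟧ˣ :=
  ∏ n ∈ Finset.range N, (U n) ^ (-(((n : ℤ) + 1) * m))

lemma cast_macMahon (m : ℤ) (N : ℕ) :
    ((macMahonPowCoeff 1 m N : ℤ) : R4) =
      PowerSeries.coeff N ((Pprod m N : R4⟦X⟧ˣ) : R4⟦X⟧) := by
  have h1 : Units.map Phi.toMonoidHom
      (∏ n ∈ Finset.range N, (oneSubUnit 1 n) ^ (-(((n : ℤ) + 1) * m))) = Pprod m N := by
    rw [map_prod, Pprod]
    refine Finset.prod_congr rfl fun n _ => ?_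
    rw [map_zpow]
    rfl
  have h2 : ((macMahonPowCoeff 1 m N : ℤ) : R4) =
      PowerSeries.coeff N (Phi
        ↑(∏ n ∈ Finset.range N, (oneSubUnit 1 n) ^ (-(((n : ℤ) + 1) * m)))) := by
    rw [Phi, PowerSeries.coeff_map, macMahonPowCoeff]
    rfl
  rw [h2, ← h1, Units.coe_map]
  rfl

lemma key1 (χ : ℤ) (a : ℕ) :
    Pprod (2 * χ) a = sigmaU (Pprod χ a) * ∏ n ∈ Finset.range a, (w n) ^ ((((n : ℕ) : ℤ) + 1) * χ) := by
  rw [Pprod, Pprod, map_prod, ← Finset.prod_mul_distrib]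
  refine Finset.prod_congr rfl fun n _ => ?_
  rw [map_zpow, w]
  have h : (-((((n : ℕ) : ℤ) + 1) * (2 * χ))) = -(2 * ((((n : ℕ) : ℤ) + 1) * χ)) := by ring
  rw [h]
  generalize (((n : ℕ) : ℤ) + 1) * χ = c
  group
  rw [show (-(c * 2)) = -2 * c by ring, mul_zpow, ← zpow_mul, ← mul_assoc, ← zpow_add,
    neg_add_cancel, zpow_zero, one_mul]

lemma key3 (χ : ℤ) (a : ℕ) (haeven : Even a) :
    PowerSeries.coeff a ((Pprod (2 * χ) a : R4⟦X⟧ˣ) : R4⟦X⟧) =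
      PowerSeries.coeff a (sigmaFun ((Pprod χ a : R4⟦X⟧ˣ) : R4⟦X⟧)) := by
  rw [key1, Units.val_mul, sigmaU_val]
  obtain ⟨g, hg, hgo⟩ := Finset.prod_induction _ OddTwo (fun _ _ => oddTwo_mul)
    oddTwo_one (fun n _ => oddTwo_w_zpow n χ)
  rw [hg, mul_add, mul_one, map_add]
  have h2 : PowerSeries.coeff a (sigmaFun ((Pprod χ a : R4⟦X⟧ˣ) : R4⟦X⟧) * (2 * g)) = 0 := by
    rw [PowerSeries.coeff_mul]
    refine Finset.sum_eq_zero fun p hp => ?_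
    rw [Finset.HasAntidiagonal.mem_antidiagonal] at hp
    rcases Nat.even_or_odd p.2 with h | h
    · have : PowerSeries.coeff p.2 (2 * g) = 0 := by
        rw [show (2 : R4⟦X⟧) = (PowerSeries.C 2 : R4⟦X⟧) from (map_ofNat _ 2).symm,
          PowerSeries.coeff_C_mul, hgo p.2 h, mul_zero]
      rw [this, mul_zero]
    · have h1 : ¬ Even p.1 := by
        obtain ⟨c, hc⟩ := haeven
        obtain ⟨d, hd⟩ := h
        rw [Nat.even_iff]
        omega
      rw [sigmaFun_coeff_odd _ _ h1, zero_mul]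
  rw [h2, add_zero]

lemma key5 (χ : ℤ) (a b : ℕ) (hba : b ≤ a) :
    PowerSeries.coeff b ((Pprod χ a : R4⟦X⟧ˣ) : R4⟦X⟧) =
      PowerSeries.coeff b ((Pprod χ b : R4⟦X⟧ˣ) : R4⟦X⟧) := by
  obtain ⟨m, rfl⟩ : ∃ m, a = b + m := ⟨a - b, by omega⟩
  have hsplit : Pprod χ (b + m) = Pprod χ b *
      ∏ i ∈ Finset.range m, (U (b + i)) ^ (-((((b + i : ℕ) : ℤ) + 1) * χ)) := by
    rw [Pprod, Pprod, Finset.prod_range_add]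
  have hmem : (∏ i ∈ Finset.range m, (U (b + i)) ^ (-((((b + i : ℕ) : ℤ) + 1) * χ)))
      ∈ GN (b + 1) := by
    refine Subgroup.prod_mem _ fun i _ => Subgroup.zpow_mem _ ?_ _
    show (X : R4⟦X⟧) ^ (b + 1) ∣ ((U (b + i) : R4⟦X⟧ˣ) : R4⟦X⟧) - 1
    rw [U_val, show (1 : R4⟦X⟧) - X ^ (b + i + 1) - 1 = -(X ^ (b + i + 1)) by ring]
    exact dvd_neg.mpr (pow_dvd_pow _ (by omega))
  rw [hsplit, Units.val_mul, coeff_mul_GN b _ _ hmem]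

/-- For `χ ∈ ℤ` and `a` a positive even integer, the coefficient of `t^a` in `M(t)^{2χ}`
is congruent mod 4 to `(-1)^{a/2}` times the coefficient of `t^{a/2}` in `M(t)^{χ}`. -/
theorem coeff_macMahon_two_chi_mod_four (χ : ℤ) (a : ℕ) (ha : 0 < a) (ha2 : 2 ∣ a) :
    macMahonPowCoeff 1 (2 * χ) a ≡ (-1) ^ (a / 2) * macMahonPowCoeff 1 χ (a / 2) [ZMOD 4] := by
  obtain ⟨b, hb⟩ := ha2
  refine (ZMod.intCast_eq_intCast_iff _ _ 4).mp ?_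
  push_cast
  rw [cast_macMahon, cast_macMahon, show a / 2 = b by omega]
  rw [key3 χ a ⟨b, by omega⟩, show a = 2 * b by omega, sigmaFun_coeff_even,
    key5 χ (2 * b) b (by omega)]
end

section
/- Let χ be an integer and let a be a positive integer divisible by 3. Then the coefficient of t^a in the formal power series M(−t)^{3χ} is congruent modulo 9 to the coefficient of t^{a/3} in M(−t)^{χ}. -/
open PowerSeries Finset

namespace MacAux

noncomputable section

variable {R : Type*} [CommRing R]

/-- The unit `1 - (C(-1)·X)^(n+1)` over any commutative ring. -/
def uA (R : Type*) [CommRing R] (n : ℕ) : (PowerSeries R)ˣ :=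
  IsUnit.unit (a := (1 : PowerSeries R) - (PowerSeries.C (-1) * PowerSeries.X) ^ (n + 1))
    (by
      rw [PowerSeries.isUnit_iff_constantCoeff]
      simp)

lemma uA_val (R : Type*) [CommRing R] (n : ℕ) :
    ((uA R n : (PowerSeries R)ˣ) : PowerSeries R)
      = 1 - (PowerSeries.C (-1) * PowerSeries.X) ^ (n + 1) :=
  IsUnit.unit_spec _

lemma map_uA {S : Type*} [CommRing S] (f : R →+* S) (n : ℕ) :
    Units.map (PowerSeries.map f).toMonoidHom (uA R n) = uA S n := by
  apply Units.ext
  rw [Units.coe_map]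
  simp [uA_val, PowerSeries.map_C, PowerSeries.map_X]

lemma sum3 {K : ℕ} (F : ℕ → ℕ → R) :
    (∑ p ∈ Finset.HasAntidiagonal.antidiagonal (3 * K),
        if 3 ∣ p.1 ∧ 3 ∣ p.2 then F (p.1 / 3) (p.2 / 3) else 0)
      = ∑ q ∈ Finset.HasAntidiagonal.antidiagonal K, F q.1 q.2 := by
  rw [← Finset.sum_filter]
  refine Finset.sum_nbij' (i := fun p => (p.1 / 3, p.2 / 3))
    (j := fun q => (3 * q.1, 3 * q.2)) ?_ ?_ ?_ ?_ ?_
  · rintro ⟨i, j⟩ hp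
    simp only [Finset.mem_filter, Finset.HasAntidiagonal.mem_antidiagonal] at hp ⊢
    omega
  · rintro ⟨i, j⟩ hq
    simp only [Finset.mem_filter, Finset.HasAntidiagonal.mem_antidiagonal] at hq ⊢
    omega
  · rintro ⟨i, j⟩ hp
    simp only [Finset.mem_filter, Finset.HasAntidiagonal.mem_antidiagonal] at hp
    obtain ⟨h1, ⟨i', rfl⟩, ⟨j', rfl⟩⟩ := hp
    simp [Nat.mul_div_cancel_left]
  · rintro ⟨i, j⟩ hq
    simp [Nat.mul_div_cancel_left]
  · rintro ⟨i, j⟩ hp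
    rfl

/-- The "expand by 3" ring homomorphism `f(X) ↦ f(X^3)`. -/
def expand3 (R : Type*) [CommRing R] : PowerSeries R →+* PowerSeries R where
  toFun f := PowerSeries.mk fun k => if 3 ∣ k then coeff (k / 3) f else 0
  map_one' := by
    ext k
    simp only [coeff_mk, coeff_one]
    split_ifs <;> first | rfl | omega
  map_zero' := by
    ext k
    simp only [coeff_mk, map_zero]
    split_ifs <;> rfl
  map_add' f g := by
    ext k
    simp only [coeff_mk, map_add]
    split_ifs <;> simp
  map_mul' f g := by
    ext k
    simp only [coeff_mk, coeff_mul]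
    by_cases hk : 3 ∣ k
    · obtain ⟨K, rfl⟩ := hk
      rw [if_pos ⟨K, rfl⟩]
      rw [show (3 * K / 3) = K by omega]
      rw [← sum3 (fun i j => coeff i f * coeff j g)]
      refine Finset.sum_congr rfl ?_
      rintro ⟨i, j⟩ _
      split_ifs with h1 h2 h3 h4 h5 <;> simp_all
    · rw [if_neg hk]
      symm
      refine Finset.sum_eq_zero ?_
      rintro ⟨i, j⟩ hp
      simp only [Finset.HasAntidiagonal.mem_antidiagonal] at hp
      by_cases hi : 3 ∣ i
      · have hj : ¬ 3 ∣ j := by omega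
        rw [if_neg hj, mul_zero]
      · rw [if_neg hi, zero_mul]

lemma coeff_expand3 (f : PowerSeries R) (k : ℕ) :
    coeff k (expand3 R f) = if 3 ∣ k then coeff (k / 3) f else 0 := by
  show coeff k (PowerSeries.mk fun k => if 3 ∣ k then coeff (k / 3) f else 0) = _
  exact coeff_mk _ _

lemma expand3_cpow (m : ℕ) :
    expand3 R ((PowerSeries.C (-1) * PowerSeries.X) ^ m)
      = (PowerSeries.C (-1) * PowerSeries.X) ^ (3 * m) := by
  have hc : ∀ j l : ℕ, coeff j ((PowerSeries.C (R := R) (-1) * PowerSeries.X) ^ l)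
      = if j = l then (-1) ^ l else 0 := by
    intro j l
    rw [mul_pow, ← map_pow, coeff_C_mul, coeff_X_pow]
    split_ifs <;> simp
  ext k
  rw [coeff_expand3, hc k (3 * m)]
  have hneg : ((-1 : R)) ^ (3 * m) = (-1) ^ m := by
    rw [pow_mul]
    norm_num
  by_cases hk : 3 ∣ k
  · rw [if_pos hk, hc]
    rcases hk with ⟨k', rfl⟩
    by_cases hm : k' = m
    · subst hm
      simp [Nat.mul_div_cancel_left, hneg]
    · rw [if_neg (by omega), if_neg (by omega)]
  · rw [if_neg hk, if_neg (by omega)]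

/-- The subgroup of units congruent to `1` mod `X^k`. -/
def nearOne (R : Type*) [CommRing R] (k : ℕ) : Subgroup (PowerSeries R)ˣ where
  carrier := {u | (X : PowerSeries R) ^ k ∣ (u : PowerSeries R) - 1}
  one_mem' := by simp
  mul_mem' := by
    intro u v hu hv
    simp only [Set.mem_setOf_eq] at hu hv ⊢
    have h : ((u * v : (PowerSeries R)ˣ) : PowerSeries R) - 1
        = (u : PowerSeries R) * ((v : PowerSeries R) - 1) + ((u : PowerSeries R) - 1) := by
      rw [Units.val_mul]; ring
    rw [h]
    exact dvd_add (hv.mul_left _) hu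
  inv_mem' := by
    intro u hu
    simp only [Set.mem_setOf_eq] at hu ⊢
    have h2 : (X : PowerSeries R) ^ k ∣ 1 - (u : PowerSeries R) := by
      have := (dvd_neg (α := PowerSeries R)).2 hu
      rwa [neg_sub] at this
    have h : ((u⁻¹ : (PowerSeries R)ˣ) : PowerSeries R) - 1
        = (↑u⁻¹ : PowerSeries R) * (1 - (u : PowerSeries R)) := by
      rw [mul_sub, mul_one, u.inv_mul]
    rw [h]
    exact h2.mul_left _



lemma nine_eq_zero : (9 : PowerSeries (ZMod 9)) = 0 := by
  rw [← map_ofNat (C (R := ZMod 9)) 9, show (9 : ZMod 9) = 0 by decide, map_zero]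

lemma three_eq_zero : (3 : PowerSeries (ZMod 3)) = 0 := by
  rw [← map_ofNat (C (R := ZMod 3)) 3, show (3 : ZMod 3) = 0 by decide, map_zero]

/-- The unit `1 + 3g` of `(ZMod 9)⟦X⟧`. -/
def Eu (g : PowerSeries (ZMod 9)) : (PowerSeries (ZMod 9))ˣ where
  val := 1 + 3 * g
  inv := 1 - 3 * g
  val_inv := by linear_combination (-(g ^ 2)) * nine_eq_zero
  inv_val := by linear_combination (-(g ^ 2)) * nine_eq_zero

lemma Eu_val (g : PowerSeries (ZMod 9)) : ((Eu g : (PowerSeries (ZMod 9))ˣ) : PowerSeries (ZMod 9)) = 1 + 3 * g := rfl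

/-- `g ↦ 1 + 3g` as a homomorphism. -/
def Ehom : Multiplicative (PowerSeries (ZMod 9)) →* (PowerSeries (ZMod 9))ˣ where
  toFun g := Eu g.toAdd
  map_one' := by
    apply Units.ext
    simp [Eu_val]
  map_mul' a b := by
    apply Units.ext
    rw [Units.val_mul, Eu_val, Eu_val, Eu_val]
    have h : (a * b).toAdd = a.toAdd + b.toAdd := rfl
    rw [h]
    linear_combination (-(a.toAdd * b.toAdd)) * nine_eq_zero

lemma Eu_zpow (g : PowerSeries (ZMod 9)) (m : ℤ) : (Eu g) ^ m = Eu (m • g) := by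
  have h := map_zpow Ehom (Multiplicative.ofAdd g) m
  simp only [Ehom, MonoidHom.coe_mk, OneHom.coe_mk, toAdd_zpow, toAdd_ofAdd] at h
  exact h.symm

lemma Eu_prod (s : Finset ℕ) (f : ℕ → PowerSeries (ZMod 9)) :
    (∏ n ∈ s, Eu (f n)) = Eu (∑ n ∈ s, f n) := by
  have h := map_prod Ehom (fun n => Multiplicative.ofAdd (f n)) s
  simp only [Ehom, MonoidHom.coe_mk, OneHom.coe_mk, toAdd_ofAdd] at h
  rw [← h]
  congr 1


-- ## Mod-3 lemmas

lemma coeff_cpow (j l : ℕ) :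
    coeff j ((PowerSeries.C (R := R) (-1) * PowerSeries.X) ^ l) = if j = l then (-1) ^ l else 0 := by
  rw [mul_pow, ← map_pow, coeff_C_mul, coeff_X_pow]
  split_ifs <;> simp

lemma X_mul_deriv_cpow (m : ℕ) :
    (X : PowerSeries R) * (d⁄dX R) ((PowerSeries.C (-1) * PowerSeries.X) ^ m)
      = m • ((PowerSeries.C (-1) * PowerSeries.X) ^ m) := by
  ext k
  rcases k with _ | j
  · rw [map_nsmul, coeff_zero_eq_constantCoeff, map_mul, constantCoeff_X, zero_mul,
      coeff_zero_eq_constantCoeff.symm, coeff_cpow]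
    split_ifs with h
    · subst h; simp
    · simp
  · rw [coeff_succ_X_mul, coeff_derivative, coeff_cpow, map_nsmul, coeff_cpow]
    split_ifs with h
    · rw [← h]
      ring
    · simp

/-- abbreviation: the inverse of `1 - (C(-1)X)^(n+1)` as a power series. -/
def hInv (R : Type*) [CommRing R] (n : ℕ) : PowerSeries R := (((uA R n)⁻¹ : (PowerSeries R)ˣ) : PowerSeries R)

lemma key3 (R : Type*) [CommRing R] [IsDomain R] (n : ℕ) :
    (X : PowerSeries R) * (d⁄dX R) (hInv R n)
      = (n + 1) • ((PowerSeries.C (-1) * PowerSeries.X) ^ (n + 1) * (hInv R n) ^ 2) := by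
  set y : PowerSeries R := (PowerSeries.C (-1) * PowerSeries.X) ^ (n + 1) with hy
  set h : PowerSeries R := hInv R n with hh
  have hu : (1 - y) * h = 1 := by
    rw [hh, hInv, ← uA_val]
    exact (uA R n).mul_inv
  have hd : (1 - y) * ((d⁄dX R) h) + h * ((d⁄dX R) (1 - y)) = 0 := by
    have := congrArg (d⁄dX R) hu
    rwa [Derivation.leibniz, smul_eq_mul, smul_eq_mul, Derivation.map_one_eq_zero] at this
  have h1 : (1 - y) * ((d⁄dX R) h) = h * ((d⁄dX R) y) := by
    have hsub : (d⁄dX R) (1 - y) = -((d⁄dX R) y) := by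
      rw [map_sub, Derivation.map_one_eq_zero, zero_sub]
    rw [hsub] at hd
    linear_combination hd
  have hXy : (X : PowerSeries R) * ((d⁄dX R) y) = ((n + 1 : ℕ) : PowerSeries R) * y := by
    rw [hy, X_mul_deriv_cpow, nsmul_eq_mul]
  have hunit : IsUnit ((1 - y) ^ 2) := by
    refine IsUnit.pow 2 ?_
    rw [show (1 : PowerSeries R) - y = ((uA R n : (PowerSeries R)ˣ) : PowerSeries R) from (uA_val R n).symm]
    exact (uA R n).isUnit
  apply hunit.mul_right_cancel
  rw [nsmul_eq_mul]
  push_cast [Nat.cast_add, Nat.cast_one] at hXy ⊢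
  linear_combination ((X : PowerSeries R) * (1 - y)) * h1 + ((1 - y) * h) * hXy
    + (-((((n : ℕ) : PowerSeries R) + 1) * y * (1 - y) * h)) * hu

lemma coeff_term_zero (n i : ℕ) (h3 : 3 ∣ i) :
    (n + 1) • coeff i
      ((PowerSeries.C (-1) * PowerSeries.X) ^ (n + 1) * (hInv (ZMod 3) n) ^ 2) = 0 := by
  rw [← map_nsmul, ← key3 (ZMod 3) n]
  rcases i with _ | j
  · rw [coeff_zero_eq_constantCoeff, map_mul, constantCoeff_X, zero_mul]
  · rw [coeff_succ_X_mul, coeff_derivative]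
    have h0 : ((j + 1 : ℕ) : ZMod 3) = 0 :=
      (ZMod.natCast_eq_zero_iff _ _).mpr h3
    push_cast at h0
    rw [h0, mul_zero]


-- ## Mod-9 cube identity

/-- The unit `1 - (C(-1)X)^(3(n+1))` of `(ZMod 9)⟦X⟧`, as the image of `uA` under `expand3`. -/
def B9 (n : ℕ) : (PowerSeries (ZMod 9))ˣ :=
  Units.map (expand3 (ZMod 9)).toMonoidHom (uA (ZMod 9) n)

lemma B9_val (n : ℕ) : ((B9 n : (PowerSeries (ZMod 9))ˣ) : PowerSeries (ZMod 9))
    = 1 - (PowerSeries.C (-1) * PowerSeries.X) ^ (3 * (n + 1)) := by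
  rw [B9, Units.coe_map]
  show expand3 (ZMod 9) ((uA (ZMod 9) n : (PowerSeries (ZMod 9))ˣ) : PowerSeries (ZMod 9)) = _
  rw [uA_val, map_sub, map_one, expand3_cpow]

/-- The series `g` with `(1-y)^3 = (1-y^3)(1+3g)`, `y = (C(-1)X)^(n+1)`. -/
def g9 (n : ℕ) : PowerSeries (ZMod 9) :=
  -((PowerSeries.C (-1) * PowerSeries.X) ^ (n + 1))
    * (1 - (PowerSeries.C (-1) * PowerSeries.X) ^ (n + 1))
    * (((B9 n)⁻¹ : (PowerSeries (ZMod 9))ˣ) : PowerSeries (ZMod 9))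

lemma cube (n : ℕ) : (uA (ZMod 9) n) ^ (3 : ℕ) = B9 n * Eu (g9 n) := by
  apply Units.ext
  rw [Units.val_pow_eq_pow_val, Units.val_mul, uA_val, B9_val, Eu_val, g9]
  set y : PowerSeries (ZMod 9) := (PowerSeries.C (-1) * PowerSeries.X) ^ (n + 1) with hy
  have hz : (PowerSeries.C (-1) * PowerSeries.X) ^ (3 * (n + 1)) = y ^ 3 := by
    rw [hy, ← pow_mul']
  rw [hz]
  have hinv : (1 - y ^ 3) * (((B9 n)⁻¹ : (PowerSeries (ZMod 9))ˣ) : PowerSeries (ZMod 9)) = 1 := by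
    rw [← hz, ← B9_val]
    exact (B9 n).mul_inv
  linear_combination (3 * y * (1 - y)) * hinv

-- ## Reduction mod 3

/-- Reduction `(ZMod 9)⟦X⟧ → (ZMod 3)⟦X⟧`. -/
def pi9 : PowerSeries (ZMod 9) →+* PowerSeries (ZMod 3) :=
  PowerSeries.map (ZMod.castHom (show (3:ℕ) ∣ 9 by norm_num) (ZMod 3))

lemma pi9_cX : pi9 (PowerSeries.C (-1) * PowerSeries.X)
    = PowerSeries.C (-1) * PowerSeries.X := by
  rw [pi9, map_mul, PowerSeries.map_C, PowerSeries.map_X, map_neg, map_one]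

lemma pi9_B9 (n : ℕ) :
    Units.map pi9.toMonoidHom (B9 n) = (uA (ZMod 3) n) ^ (3 : ℕ) := by
  apply Units.ext
  rw [Units.coe_map, Units.val_pow_eq_pow_val, uA_val]
  show pi9 ((B9 n : (PowerSeries (ZMod 9))ˣ) : PowerSeries (ZMod 9)) = _
  rw [B9_val, map_sub, map_one, map_pow, pi9_cX]
  set y : PowerSeries (ZMod 3) := (PowerSeries.C (-1) * PowerSeries.X) ^ (n + 1) with hy
  have hz : (PowerSeries.C (-1) * PowerSeries.X) ^ (3 * (n + 1)) = y ^ 3 := by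
    rw [hy, ← pow_mul']
  rw [hz]
  linear_combination (y - y ^ 2) * three_eq_zero

lemma pi9_g9 (n : ℕ) :
    pi9 (g9 n) = -((PowerSeries.C (-1) * PowerSeries.X) ^ (n + 1)) * (hInv (ZMod 3) n) ^ 2 := by
  rw [g9, map_mul, map_mul, map_neg, map_pow, map_sub, map_one, map_pow, pi9_cX]
  have hB : pi9 (((B9 n)⁻¹ : (PowerSeries (ZMod 9))ˣ) : PowerSeries (ZMod 9))
      = (hInv (ZMod 3) n) ^ 3 := by
    have h1 : pi9 (((B9 n)⁻¹ : (PowerSeries (ZMod 9))ˣ) : PowerSeries (ZMod 9))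
        = ((Units.map pi9.toMonoidHom (B9 n))⁻¹ : (PowerSeries (ZMod 3))ˣ) := by
      rw [← map_inv (Units.map pi9.toMonoidHom) (B9 n), Units.coe_map]
      rfl
    rw [h1, pi9_B9, ← inv_pow, Units.val_pow_eq_pow_val]
    rfl
  rw [hB]
  set y : PowerSeries (ZMod 3) := (PowerSeries.C (-1) * PowerSeries.X) ^ (n + 1) with hy
  set h : PowerSeries (ZMod 3) := hInv (ZMod 3) n with hh
  have hu : (1 - y) * h = 1 := by
    rw [hh, hInv, ← uA_val]
    exact (uA (ZMod 3) n).mul_inv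
  linear_combination (-(y * h ^ 2)) * hu

end
end MacAux

open MacAux in
/-- For `χ ∈ ℤ` and `a` a positive integer divisible by 3, the coefficient of `t^a` in
`M(-t)^{3χ}` is congruent mod 9 to the coefficient of `t^{a/3}` in `M(-t)^{χ}`. -/
theorem coeff_macMahon_three_chi_mod_nine (χ : ℤ) (a : ℕ) (ha : 0 < a) (ha3 : 3 ∣ a) :
    macMahonPowCoeff (-1) (3 * χ) a ≡ macMahonPowCoeff (-1) χ (a / 3) [ZMOD 9] := by
  classical
  apply (ZMod.intCast_eq_intCast_iff _ _ 9).mp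
  unfold macMahonPowCoeff
  -- push the coefficient through reduction mod 9
  have hcast : ∀ (f : PowerSeries ℤ) (k : ℕ),
      ((PowerSeries.coeff k f : ℤ) : ZMod 9)
        = PowerSeries.coeff k (PowerSeries.map (Int.castRingHom (ZMod 9)) f) := by
    intro f k
    rw [PowerSeries.coeff_map]
    rfl
  rw [hcast, hcast]
  have hmap : ∀ (s : Finset ℕ) (e : ℕ → ℤ),
      PowerSeries.map (Int.castRingHom (ZMod 9))
          ↑(∏ n ∈ s, (oneSubUnit (-1) n) ^ (e n))
        = (↑(∏ n ∈ s, (uA (ZMod 9) n) ^ (e n)) : PowerSeries (ZMod 9)) := by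
    intro s e
    have h1 : ∀ n : ℕ, oneSubUnit (-1) n = uA ℤ n := by
      intro n
      apply Units.ext
      rw [uA_val]
      exact IsUnit.unit_spec _
    calc PowerSeries.map (Int.castRingHom (ZMod 9)) ↑(∏ n ∈ s, (oneSubUnit (-1) n) ^ (e n))
        = ↑(Units.map (PowerSeries.map (Int.castRingHom (ZMod 9))).toMonoidHom
            (∏ n ∈ s, (oneSubUnit (-1) n) ^ (e n))) := (Units.coe_map _ _).symm
      _ = _ := by
        congr 1
        rw [map_prod]
        refine Finset.prod_congr rfl fun n _ => ?_
        rw [map_zpow, h1, map_uA]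
  rw [hmap, hmap]
  -- split each factor:  uA^(3 m) = B9^m * Eu (m • g9)
  have hsplit : ∀ n : ℕ, (uA (ZMod 9) n) ^ (-(((n:ℤ) + 1) * (3 * χ)))
      = (B9 n) ^ (-(((n:ℤ) + 1) * χ)) * Eu ((-(((n:ℤ) + 1) * χ)) • g9 n) := by
    intro n
    have h1 : (-(((n:ℤ) + 1) * (3 * χ))) = 3 * (-(((n:ℤ) + 1) * χ)) := by ring
    have h2 : (uA (ZMod 9) n) ^ (3:ℤ) = B9 n * Eu (g9 n) := by
      rw [show (3:ℤ) = ((3:ℕ):ℤ) from by norm_num, zpow_natCast, cube]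
    rw [h1, zpow_mul, h2, mul_zpow, Eu_zpow]
  rw [Finset.prod_congr rfl fun n _ => hsplit n, Finset.prod_mul_distrib, Eu_prod]
  set G : PowerSeries (ZMod 9) :=
    ∑ n ∈ Finset.range a, (-(((n:ℤ) + 1) * χ)) • g9 n with hG
  set P : PowerSeries (ZMod 9) :=
    (↑(∏ n ∈ Finset.range a, (B9 n) ^ (-(((n:ℤ) + 1) * χ))) : PowerSeries (ZMod 9)) with hP
  have hval : ((↑((∏ n ∈ Finset.range a, (B9 n) ^ (-(((n:ℤ) + 1) * χ))) * Eu G)) : PowerSeries (ZMod 9))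
      = P * (1 + 3 * G) := by
    rw [Units.val_mul, Eu_val, hP]
  rw [hval]
  -- P is the expansion by 3 of the analogous product of uA's
  have hPT : P = expand3 (ZMod 9)
      (↑(∏ n ∈ Finset.range a, (uA (ZMod 9) n) ^ (-(((n:ℤ) + 1) * χ)))) := by
    rw [hP]
    have h : (∏ n ∈ Finset.range a, (B9 n) ^ (-(((n:ℤ) + 1) * χ)))
        = Units.map (expand3 (ZMod 9)).toMonoidHom
            (∏ n ∈ Finset.range a, (uA (ZMod 9) n) ^ (-(((n:ℤ) + 1) * χ))) := by
      rw [map_prod]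
      exact Finset.prod_congr rfl fun n _ => (map_zpow _ _ _).symm
    rw [h, Units.coe_map]
    rfl
  rw [mul_add, mul_one, map_add]
  -- the term with 3G has vanishing coefficient
  have hzero : PowerSeries.coeff a (P * (3 * G)) = 0 := by
    have h3C : P * (3 * G) = PowerSeries.C 3 * (G * P) := by
      rw [show (PowerSeries.C (R := ZMod 9)) (3 : ZMod 9) = (3 : PowerSeries (ZMod 9)) from
        map_ofNat _ 3]
      ring
    rw [h3C, PowerSeries.coeff_C_mul]
    have hdiv : ∀ x : ZMod 9,
        (ZMod.castHom (show (3:ℕ) ∣ 9 by norm_num) (ZMod 3)) x = 0 → (3:ZMod 9) * x = 0 := by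
      decide
    apply hdiv
    have hmapc : (ZMod.castHom (show (3:ℕ) ∣ 9 by norm_num) (ZMod 3))
        (PowerSeries.coeff a (G * P)) = PowerSeries.coeff a (pi9 (G * P)) := by
      rw [show pi9 = PowerSeries.map (ZMod.castHom (show (3:ℕ) ∣ 9 by norm_num) (ZMod 3))
        from rfl, PowerSeries.coeff_map]
    rw [hmapc, map_mul, PowerSeries.coeff_mul]
    apply Finset.sum_eq_zero
    rintro ⟨i, j⟩ hij
    simp only [Finset.HasAntidiagonal.mem_antidiagonal] at hij
    by_cases hj : 3 ∣ j
    · have hi : 3 ∣ i := by omega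
      have hGi : PowerSeries.coeff i (pi9 G) = 0 := by
        rw [hG, map_sum, map_sum]
        apply Finset.sum_eq_zero
        intro n _
        rw [map_zsmul, map_zsmul, pi9_g9, neg_mul, map_neg, zsmul_eq_mul]
        have hw := coeff_term_zero n i hi
        rw [nsmul_eq_mul] at hw
        push_cast at hw ⊢
        linear_combination (χ : ZMod 3) * hw
      rw [hGi, zero_mul]
    · have hPj : PowerSeries.coeff j (pi9 P) = 0 := by
        rw [hPT, show pi9 = PowerSeries.map (ZMod.castHom (show (3:ℕ) ∣ 9 by norm_num) (ZMod 3))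
          from rfl, PowerSeries.coeff_map, coeff_expand3, if_neg hj, map_zero]
      rw [hPj, mul_zero]
  rw [hzero, add_zero, hPT, coeff_expand3, if_pos ha3]
  -- truncate the product from `range a` to `range (a/3)`
  have hsub : Finset.range (a / 3) ⊆ Finset.range a := by
    intro x hx
    simp only [Finset.mem_range] at hx ⊢
    omega
  rw [← Finset.prod_sdiff hsub, Units.val_mul]
  have hW : (X : PowerSeries (ZMod 9)) ^ (a / 3 + 1)
      ∣ (↑(∏ n ∈ Finset.range a \ Finset.range (a / 3),
          (uA (ZMod 9) n) ^ (-(((n:ℤ) + 1) * χ))) : PowerSeries (ZMod 9)) - 1 := by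
    have hmem : (∏ n ∈ Finset.range a \ Finset.range (a / 3),
        (uA (ZMod 9) n) ^ (-(((n:ℤ) + 1) * χ))) ∈ nearOne (ZMod 9) (a / 3 + 1) := by
      apply Subgroup.prod_mem
      intro n hn
      simp only [Finset.mem_sdiff, Finset.mem_range] at hn
      apply Subgroup.zpow_mem
      show (X : PowerSeries (ZMod 9)) ^ (a / 3 + 1) ∣ _
      rw [uA_val]
      have he : ((1:PowerSeries (ZMod 9)) - (PowerSeries.C (-1) * X) ^ (n+1)) - 1
          = -((PowerSeries.C (-1) * X) ^ (n+1)) := by ring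
      rw [he, dvd_neg, mul_pow, ← map_pow]
      exact Dvd.dvd.mul_left (pow_dvd_pow X (by omega)) _
    exact hmem
  have hsplit2 : ((↑(∏ n ∈ Finset.range a \ Finset.range (a / 3),
        (uA (ZMod 9) n) ^ (-(((n:ℤ) + 1) * χ))) : PowerSeries (ZMod 9)))
        * (↑(∏ n ∈ Finset.range (a / 3), (uA (ZMod 9) n) ^ (-(((n:ℤ) + 1) * χ))) : PowerSeries (ZMod 9))
      = (↑(∏ n ∈ Finset.range (a / 3), (uA (ZMod 9) n) ^ (-(((n:ℤ) + 1) * χ))) : PowerSeries (ZMod 9))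
        + (((↑(∏ n ∈ Finset.range a \ Finset.range (a / 3),
            (uA (ZMod 9) n) ^ (-(((n:ℤ) + 1) * χ))) : PowerSeries (ZMod 9))) - 1)
          * (↑(∏ n ∈ Finset.range (a / 3), (uA (ZMod 9) n) ^ (-(((n:ℤ) + 1) * χ))) : PowerSeries (ZMod 9)) := by
    ring
  rw [hsplit2, map_add,
    (PowerSeries.X_pow_dvd_iff.mp (hW.mul_right _)) (a / 3) (by omega), add_zero]
end

section
/- Let χ be an integer and a a positive integer. Then (−1)^a · ∑_{k=1}^{a} (χ^k / k!) · ∑ (∏_{l=1}^{k} n_l) / (∏_{l=1}^{k} i_l), where the inner sum runs over all pairs of k-tuples (n_1,…,n_k), (i_1,…,i_k) of positive integers with ∑_{l=1}^{k} n_l i_l = a, equals the coefficient of t^a in the formal power series M(−t)^{χ}, both viewed as rational numbers. -/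
open PowerSeries Finset

/-- The sum over all pairs of `k`-tuples `(n_1,…,n_k)`, `(i_1,…,i_k)` of positive integers
with `∑ n_l i_l = a` of `(∏ n_l)/(∏ i_l)`.  The constraint forces every entry to lie in
`{1, …, a}`, so the sum may be taken over tuples with entries in `[1, a]`. -/
noncomputable def tupleSum (k a : ℕ) : ℚ :=
  ∑ f ∈ (Fintype.piFinset fun _ : Fin k => Finset.Icc 1 a ×ˢ Finset.Icc 1 a) |>.filter
      (fun f => ∑ l, (f l).1 * (f l).2 = a),
    (∏ l, ((f l).1 : ℚ)) / ∏ l, ((f l).2 : ℚ)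

noncomputable def LL : PowerSeries ℚ := PowerSeries.mk fun n => if n = 0 then 0 else (n : ℚ)⁻¹

lemma constL : constantCoeff LL = 0 := by simp [LL]

lemma coeff_pow_eq_zero {f : PowerSeries ℚ} (hf : constantCoeff f = 0) {k n : ℕ}
    (h : n < k) : PowerSeries.coeff n (f ^ k) = 0 := by
  have hX : (X : PowerSeries ℚ) ∣ f := X_dvd_iff.mpr hf
  have : (X : PowerSeries ℚ) ^ k ∣ f ^ k := pow_dvd_pow_of_dvd hX k
  exact (X_pow_dvd_iff.mp this) n h

lemma dapp (f : PowerSeries ℚ) : PowerSeries.derivative ℚ f = PowerSeries.derivativeFun f := rfl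

lemma deriv_LL : PowerSeries.derivative ℚ LL = PowerSeries.mk fun _ => (1 : ℚ) := by
  ext n
  simp [PowerSeries.coeff_derivative, LL]
  field_simp

noncomputable def gg (n : ℕ) : ℚ :=
  ∑ k ∈ range (n + 1), ((Nat.factorial k : ℚ))⁻¹ * PowerSeries.coeff n (LL ^ k)

lemma gg_zero : gg 0 = 1 := by simp [gg]

lemma gg_eq_ext {p m : ℕ} (h : p ≤ m) :
    gg p = ∑ k ∈ range (m+1), ((Nat.factorial k : ℚ))⁻¹ * PowerSeries.coeff p (LL^k) := by
  rw [gg]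
  apply Finset.sum_subset
  · exact Finset.range_subset_range.mpr (by omega)
  · intro k hk hknot
    have hpk : p < k := by simp only [Finset.mem_range] at hk hknot; omega
    rw [coeff_pow_eq_zero constL hpk, mul_zero]

lemma gg_rec (n : ℕ) : ((n : ℚ) + 1) * gg (n + 1) = ∑ p ∈ range (n + 1), gg p := by
  have hstep : ∀ k : ℕ, ((n : ℚ) + 1) * PowerSeries.coeff (n + 1) (LL ^ (k+1))
      = (k + 1 : ℚ) * ∑ p ∈ range (n + 1), PowerSeries.coeff p (LL ^ k) := by
    intro k
    have hD : PowerSeries.derivative ℚ (LL ^ (k+1))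
        = (k+1) • LL ^ k • PowerSeries.derivative ℚ LL := by
      simpa using Derivation.leibniz_pow (PowerSeries.derivative ℚ) LL (k+1)
    have h1 : PowerSeries.coeff n (PowerSeries.derivative ℚ (LL ^ (k+1)))
        = PowerSeries.coeff (n+1) (LL ^ (k+1)) * (n + 1 : ℚ) := by
      rw [PowerSeries.coeff_derivative]
    have h2 : PowerSeries.coeff n (LL ^ k * PowerSeries.mk fun _ => (1:ℚ))
        = ∑ p ∈ range (n + 1), PowerSeries.coeff p (LL ^ k) := by
      rw [PowerSeries.coeff_mul]
      rw [Finset.Nat.sum_antidiagonal_eq_sum_range_succ_mk]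
      simp
    rw [hD, deriv_LL, smul_eq_mul, map_nsmul, nsmul_eq_mul, h2] at h1
    rw [mul_comm, ← h1]
    push_cast
    ring
  have h0 : ((n:ℚ)+1) * gg (n+1)
      = ∑ k ∈ range (n+1),
          ((Nat.factorial (k+1) : ℚ))⁻¹ * (((n:ℚ)+1) * PowerSeries.coeff (n+1) (LL^(k+1))) := by
    rw [gg, Finset.mul_sum, Finset.sum_range_succ']
    simp only [Nat.factorial_zero, Nat.cast_one, inv_one, pow_zero, one_mul]
    rw [PowerSeries.coeff_one]
    simp only [Nat.succ_ne_zero, if_false, mul_zero, add_zero]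
    exact Finset.sum_congr rfl fun k _ => by ring
  rw [h0]
  have h1 : ∀ k ∈ range (n+1),
      ((Nat.factorial (k+1) : ℚ))⁻¹ * (((n:ℚ)+1) * PowerSeries.coeff (n+1) (LL^(k+1)))
        = ∑ p ∈ range (n+1), ((Nat.factorial k : ℚ))⁻¹ * PowerSeries.coeff p (LL^k) := by
    intro k _
    have hk : (Nat.factorial k : ℚ) ≠ 0 := Nat.cast_ne_zero.mpr (Nat.factorial_ne_zero k)
    have hk1 : ((k:ℚ) + 1) ≠ 0 := by positivity
    have hsc : ((Nat.factorial (k+1) : ℚ))⁻¹ * ((k:ℚ)+1) = ((Nat.factorial k : ℚ))⁻¹ := by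
      rw [Nat.factorial_succ]
      push_cast
      rw [mul_inv, mul_comm, ← mul_assoc, mul_inv_cancel₀ hk1, one_mul]
    rw [hstep k, ← mul_assoc, hsc, Finset.mul_sum]
  rw [Finset.sum_congr rfl h1, Finset.sum_comm]
  refine Finset.sum_congr rfl fun p hp => ?_
  rw [gg_eq_ext (by simp at hp; omega : p ≤ n)]

lemma gg_one : ∀ n, gg n = 1 := by
  intro n
  induction n using Nat.strong_induction_on with
  | _ n ih =>
    match n with
    | 0 => exact gg_zero
    | (m+1) =>
      have h := gg_rec m
      have hsum : ∑ p ∈ range (m+1), gg p = (m:ℚ) + 1 := by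
        rw [Finset.sum_congr rfl fun p hp => ih p (by simp at hp; omega)]
        simp
      rw [hsum] at h
      have : ((m:ℚ)+1) ≠ 0 := by positivity
      field_simp at h
      exact h

noncomputable def EE (a : ℕ) (f : PowerSeries ℚ) : PowerSeries ℚ :=
  ∑ k ∈ range (a+1), PowerSeries.C ((Nat.factorial k : ℚ))⁻¹ * f^k

noncomputable def ell (a : ℕ) (u : PowerSeries ℚ) : PowerSeries ℚ :=
  ∑ i ∈ range a, PowerSeries.C (((i : ℚ)+1))⁻¹ * u^(i+1)

lemma constantCoeff_ell (a : ℕ) {u : PowerSeries ℚ} (hu : constantCoeff u = 0) :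
    constantCoeff (ell a u) = 0 := by
  simp [ell, map_sum, hu]

lemma EE_congr {a : ℕ} {f g : PowerSeries ℚ} (h : (X : PowerSeries ℚ)^(a+1) ∣ f - g) :
    (X : PowerSeries ℚ)^(a+1) ∣ EE a f - EE a g := by
  rw [EE, EE, ← Finset.sum_sub_distrib]
  refine Finset.dvd_sum fun k _ => ?_
  rw [← mul_sub]
  exact Dvd.dvd.mul_left (h.trans (sub_dvd_pow_sub_pow f g k)) _

lemma coeff_ell_X {a m : ℕ} (hm : m ≤ a) :
    PowerSeries.coeff m (ell a X) = PowerSeries.coeff m LL := by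
  rw [ell]
  simp only [map_sum, PowerSeries.coeff_C_mul, PowerSeries.coeff_X_pow]
  rcases m with _ | p
  · simp [LL]
  · rw [Finset.sum_eq_single p]
    · simp [LL]
    · intro i _ hip
      simp only [mul_ite, mul_one, mul_zero, ite_eq_right_iff]
      intro h; omega
    · intro hp
      simp only [Finset.mem_range] at hp
      omega

lemma keyX (a : ℕ) : (X : PowerSeries ℚ)^(a+1) ∣ (1 - X) * EE a (ell a X) - 1 := by
  have hdvd : (X : PowerSeries ℚ)^(a+1) ∣ LL - ell a X := by
    rw [X_pow_dvd_iff]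
    intro m hm
    rw [map_sub, coeff_ell_X (by omega : m ≤ a), sub_self]
  have hEc : ∀ m ≤ a, PowerSeries.coeff m (EE a (ell a X)) = 1 := by
    intro m hm
    have h2 := EE_congr hdvd
    rw [X_pow_dvd_iff] at h2
    have h3 := h2 m (by omega)
    rw [map_sub, sub_eq_zero] at h3
    rw [← h3, EE]
    simp only [map_sum, PowerSeries.coeff_C_mul]
    rw [← gg_eq_ext hm]
    exact gg_one m
  rw [X_pow_dvd_iff]
  intro m hm
  have hm' : m ≤ a := by omega
  rw [sub_mul, one_mul, map_sub, map_sub, PowerSeries.coeff_one]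
  rcases m with _ | p
  · simp only [PowerSeries.coeff_zero_eq_constantCoeff, map_mul, constantCoeff_X, zero_mul,
      if_pos rfl]
    have := hEc 0 (by omega)
    rw [PowerSeries.coeff_zero_eq_constantCoeff] at this
    rw [this]
    norm_num
  · rw [PowerSeries.coeff_succ_X_mul, hEc (p+1) hm', hEc p (by omega)]
    simp

noncomputable def ellp (a : ℕ) : Polynomial ℚ :=
  ∑ i ∈ range a, Polynomial.C (((i : ℚ)+1))⁻¹ * Polynomial.X^(i+1)

noncomputable def PP (a : ℕ) : Polynomial ℚ :=
  (1 - Polynomial.X) *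
    (∑ k ∈ range (a+1), Polynomial.C ((Nat.factorial k : ℚ))⁻¹ * (ellp a)^k) - 1

lemma algebraMap_eq_C (c : ℚ) : algebraMap ℚ (PowerSeries ℚ) c = PowerSeries.C c := rfl

lemma aeval_PP (a : ℕ) (u : PowerSeries ℚ) :
    Polynomial.aeval u (PP a) = (1 - u) * EE a (ell a u) - 1 := by
  simp only [PP, EE, ell, ellp, map_sub, map_mul, map_sum, map_pow, map_one,
    Polynomial.aeval_C, Polynomial.aeval_X, algebraMap_eq_C]

lemma PP_dvd (a : ℕ) : (Polynomial.X : Polynomial ℚ)^(a+1) ∣ PP a := by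
  rw [Polynomial.X_pow_dvd_iff]
  intro m hm
  have hcoe : ((PP a : Polynomial ℚ) : PowerSeries ℚ) = (1 - X) * EE a (ell a X) - 1 := by
    rw [← Polynomial.eval₂_C_X_eq_coe,
      show Polynomial.eval₂ PowerSeries.C X (PP a)
          = Polynomial.aeval (X : PowerSeries ℚ) (PP a) from rfl, aeval_PP]
  have h := keyX a
  rw [← hcoe, X_pow_dvd_iff] at h
  have := h m hm
  rwa [Polynomial.coeff_coe] at this

lemma key_general (a : ℕ) {u : PowerSeries ℚ} (hu : constantCoeff u = 0) :
    (X : PowerSeries ℚ)^(a+1) ∣ (1 - u) * EE a (ell a u) - 1 := by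
  obtain ⟨r, hr⟩ := PP_dvd a
  have : (1 - u) * EE a (ell a u) - 1 = u^(a+1) * Polynomial.aeval u r := by
    rw [← aeval_PP, hr, map_mul, map_pow, Polynomial.aeval_X]
  rw [this]
  exact Dvd.dvd.mul_right (pow_dvd_pow_of_dvd (X_dvd_iff.mpr hu) _) _

section congruence
variable {N : ℕ}

lemma dv_trans {f g h : PowerSeries ℚ} (h1 : (X:PowerSeries ℚ)^N ∣ f - g)
    (h2 : (X:PowerSeries ℚ)^N ∣ g - h) : (X:PowerSeries ℚ)^N ∣ f - h := by
  have := dvd_add h1 h2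
  rwa [sub_add_sub_cancel] at this

lemma dv_refl (f : PowerSeries ℚ) : (X:PowerSeries ℚ)^N ∣ f - f := by simp

lemma dv_symm {f g : PowerSeries ℚ} (h1 : (X:PowerSeries ℚ)^N ∣ f - g) :
    (X:PowerSeries ℚ)^N ∣ g - f := by
  have := h1.neg_right
  rwa [neg_sub] at this

lemma dv_mul {f g h k : PowerSeries ℚ} (h1 : (X:PowerSeries ℚ)^N ∣ f - g)
    (h2 : (X:PowerSeries ℚ)^N ∣ h - k) : (X:PowerSeries ℚ)^N ∣ f*h - g*k := by
  have : f*h - g*k = (f-g)*h + g*(h-k) := by ring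
  rw [this]
  exact dvd_add (h1.mul_right _) (h2.mul_left _)

lemma dv_pow {f g : PowerSeries ℚ} (h1 : (X:PowerSeries ℚ)^N ∣ f - g) (p : ℕ) :
    (X:PowerSeries ℚ)^N ∣ f^p - g^p :=
  h1.trans (sub_dvd_pow_sub_pow f g p)

end congruence

lemma EE_zero (a : ℕ) : EE a 0 = 1 := by
  rw [EE, Finset.sum_eq_single 0]
  · simp
  · intro k _ hk
    rw [zero_pow hk, mul_zero]
  · intro h
    simp at h

lemma EE_add (a : ℕ) {f g : PowerSeries ℚ} (hf : constantCoeff f = 0)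
    (hg : constantCoeff g = 0) :
    (X : PowerSeries ℚ)^(a+1) ∣ EE a f * EE a g - EE a (f+g) := by
  classical
  set T : ℕ × ℕ → PowerSeries ℚ := fun p =>
    (PowerSeries.C ((Nat.factorial p.1 : ℚ))⁻¹ * f^p.1) *
      (PowerSeries.C ((Nat.factorial p.2 : ℚ))⁻¹ * g^p.2) with hT
  have step1 : EE a f * EE a g = ∑ p ∈ range (a+1) ×ˢ range (a+1), T p := by
    rw [EE, EE, Finset.sum_mul_sum, ← Finset.sum_product']
  have step2 : EE a (f+g) =
      ∑ p ∈ (range (a+1) ×ˢ range (a+1)).filter (fun p => p.1 + p.2 ≤ a), T p := by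
    have hbiU : ((range (a+1) ×ˢ range (a+1)).filter (fun p => p.1 + p.2 ≤ a))
        = (range (a+1)).biUnion (fun m => Finset.HasAntidiagonal.antidiagonal m) := by
      ext ⟨k, j⟩
      simp only [Finset.mem_filter, Finset.mem_product, Finset.mem_range,
        Finset.mem_biUnion, Finset.HasAntidiagonal.mem_antidiagonal]
      constructor
      · rintro ⟨⟨_, _⟩, h⟩; exact ⟨k+j, by omega, rfl⟩
      · rintro ⟨m, hm, hmem⟩
        omega
    rw [hbiU, Finset.sum_biUnion]
    · rw [EE]
      refine Finset.sum_congr rfl fun m _ => ?_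
      rw [Commute.add_pow' (Commute.all f g), Finset.mul_sum]
      refine Finset.sum_congr rfl fun ⟨k, j⟩ hkj => ?_
      rw [Finset.HasAntidiagonal.mem_antidiagonal] at hkj
      rw [hT]
      simp only
      rw [nsmul_eq_mul, mul_mul_mul_comm, ← map_mul,
        show ((m.choose k : ℕ) : PowerSeries ℚ) = PowerSeries.C ((m.choose k : ℕ) : ℚ)
          from (map_natCast PowerSeries.C _).symm,
        ← mul_assoc, ← map_mul]
      congr 1
      congr 1
      have hfac : (m.choose k) * (Nat.factorial k) * (Nat.factorial j) = Nat.factorial m := by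
        rw [← hkj]
        simpa using Nat.choose_mul_factorial_mul_factorial (Nat.le_add_right k j)
      have h1 : (Nat.factorial k : ℚ) ≠ 0 := Nat.cast_ne_zero.mpr (Nat.factorial_ne_zero k)
      have h2 : (Nat.factorial j : ℚ) ≠ 0 := Nat.cast_ne_zero.mpr (Nat.factorial_ne_zero j)
      have h3 : (Nat.factorial m : ℚ) ≠ 0 := Nat.cast_ne_zero.mpr (Nat.factorial_ne_zero m)
      field_simp
      push_cast [← hfac]
      ring
    · intro x _ y _ hxy
      simp only [Function.onFun]
      rw [Finset.disjoint_left]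
      intro p hp hp'
      rw [Finset.HasAntidiagonal.mem_antidiagonal] at hp hp'
      exact hxy (by omega)
  rw [step1, step2, ← Finset.sum_filter_add_sum_filter_not (range (a+1) ×ˢ range (a+1))
    (fun p => p.1 + p.2 ≤ a) T, add_sub_cancel_left]
  refine Finset.dvd_sum fun p hp => ?_
  rw [Finset.mem_filter] at hp
  have hgt : a + 1 ≤ p.1 + p.2 := by omega
  obtain ⟨f0, hf0⟩ := X_dvd_iff.mpr hf
  obtain ⟨g0, hg0⟩ := X_dvd_iff.mpr hg
  have hTp : T p = (X^(p.1+p.2)) *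
      (PowerSeries.C ((Nat.factorial p.1 : ℚ))⁻¹ * f0^p.1 *
        (PowerSeries.C ((Nat.factorial p.2 : ℚ))⁻¹ * g0^p.2)) := by
    rw [hT]
    simp only
    rw [hf0, hg0, mul_pow, mul_pow, pow_add]
    ring
  rw [hTp]
  exact (pow_dvd_pow X hgt).mul_right _

lemma EE_pow_nat (a : ℕ) {f : PowerSeries ℚ} (hf : constantCoeff f = 0) (m : ℕ) :
    (X : PowerSeries ℚ)^(a+1) ∣ (EE a f)^m - EE a (PowerSeries.C (m : ℚ) * f) := by
  induction m with
  | zero => simp [EE_zero]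
  | succ p ih =>
    have hpf : constantCoeff (PowerSeries.C (p : ℚ) * f) = 0 := by simp [hf]
    have h1 : (X : PowerSeries ℚ)^(a+1) ∣ (EE a f)^(p+1)
        - EE a (PowerSeries.C (p : ℚ) * f) * EE a f := by
      rw [pow_succ]
      exact dv_mul ih (dv_refl _)
    refine dv_trans h1 ?_
    have h2 := EE_add a hpf hf
    have : PowerSeries.C (p : ℚ) * f + f = PowerSeries.C ((p : ℚ) + 1) * f := by
      rw [map_add, map_one, add_mul, one_mul]
    rw [this] at h2
    have hcast : ((p + 1 : ℕ) : ℚ) = (p : ℚ) + 1 := by push_cast; ring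
    rw [hcast]
    exact h2

lemma EE_prod_sum (a : ℕ) {ι : Type*} (s : Finset ι) (F : ι → PowerSeries ℚ)
    (hF : ∀ n ∈ s, constantCoeff (F n) = 0) :
    (X : PowerSeries ℚ)^(a+1) ∣ (∏ n ∈ s, EE a (F n)) - EE a (∑ n ∈ s, F n) := by
  classical
  induction s using Finset.cons_induction with
  | empty => simp [EE_zero]
  | cons x s hx ih =>
    rw [Finset.prod_cons, Finset.sum_cons]
    have h1 : (X : PowerSeries ℚ)^(a+1) ∣ EE a (F x) * (∏ n ∈ s, EE a (F n))
        - EE a (F x) * EE a (∑ n ∈ s, F n) := by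
      exact dv_mul (dv_refl _) (ih fun n hn => hF n (Finset.mem_cons_of_mem hn))
    refine dv_trans h1 ?_
    refine EE_add a (hF x (Finset.mem_cons_self x s)) ?_
    rw [map_sum]
    exact Finset.sum_eq_zero fun n hn => hF n (Finset.mem_cons_of_mem hn)

section units
variable {a : ℕ} {u : PowerSeries ℚ} (hu : constantCoeff u = 0)
  {U : (PowerSeries ℚ)ˣ} (hU : (U : PowerSeries ℚ) = 1 - u)

include hu hU

lemma unit_key : (X : PowerSeries ℚ)^(a+1) ∣ (U : PowerSeries ℚ) * EE a (ell a u) - 1 := by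
  rw [hU]
  exact key_general a hu

lemma unit_inv_cong :
    (X : PowerSeries ℚ)^(a+1) ∣ ((U⁻¹ : (PowerSeries ℚ)ˣ) : PowerSeries ℚ) - EE a (ell a u) := by
  have heq : ((U⁻¹ : (PowerSeries ℚ)ˣ) : PowerSeries ℚ) * ((U : PowerSeries ℚ) * EE a (ell a u) - 1)
      = EE a (ell a u) - ((U⁻¹ : (PowerSeries ℚ)ˣ) : PowerSeries ℚ) := by
    rw [mul_sub, ← mul_assoc, Units.inv_mul, one_mul, mul_one]
  refine dv_symm ?_
  rw [← heq]
  exact (unit_key hu hU).mul_left _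

lemma unit_val_cong :
    (X : PowerSeries ℚ)^(a+1) ∣ (U : PowerSeries ℚ)
      - EE a (PowerSeries.C (-1 : ℚ) * ell a u) := by
  have hell : constantCoeff (ell a u) = 0 := constantCoeff_ell a hu
  have hell' : constantCoeff (PowerSeries.C (-1 : ℚ) * ell a u) = 0 := by simp [hell]
  have hzero : ell a u + PowerSeries.C (-1 : ℚ) * ell a u = 0 := by
    rw [map_neg, map_one, neg_one_mul, add_neg_cancel]
  have hEnn : (X : PowerSeries ℚ)^(a+1)
      ∣ EE a (ell a u) * EE a (PowerSeries.C (-1:ℚ) * ell a u) - 1 := by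
    have := EE_add a hell hell'
    rwa [hzero, EE_zero] at this
  have h1 : (X : PowerSeries ℚ)^(a+1) ∣ (U : PowerSeries ℚ)
      - (U : PowerSeries ℚ) * (EE a (ell a u) * EE a (PowerSeries.C (-1:ℚ) * ell a u)) := by
    refine dv_symm ?_
    have := dv_mul (dv_refl (N := a+1) (U : PowerSeries ℚ)) hEnn
    rwa [mul_one] at this
  refine dv_trans h1 ?_
  have heq : (U : PowerSeries ℚ) * (EE a (ell a u) * EE a (PowerSeries.C (-1:ℚ) * ell a u))
      - EE a (PowerSeries.C (-1:ℚ) * ell a u)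
      = ((U : PowerSeries ℚ) * EE a (ell a u) - 1) * EE a (PowerSeries.C (-1:ℚ) * ell a u) := by
    ring
  rw [heq]
  exact (unit_key hu hU).mul_right _

lemma unit_zpow_cong (m : ℤ) :
    (X : PowerSeries ℚ)^(a+1) ∣ ((U^m : (PowerSeries ℚ)ˣ) : PowerSeries ℚ)
      - EE a (PowerSeries.C (-(m : ℚ)) * ell a u) := by
  have hell : constantCoeff (ell a u) = 0 := constantCoeff_ell a hu
  have hell' : constantCoeff (PowerSeries.C (-1 : ℚ) * ell a u) = 0 := by simp [hell]
  cases m with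
  | ofNat p =>
    rw [Int.ofNat_eq_coe, zpow_natCast, Units.val_pow_eq_pow_val]
    refine dv_trans (dv_pow (unit_val_cong hu hU) p) ?_
    have := EE_pow_nat a hell' p
    have harg : PowerSeries.C ((p:ℚ)) * (PowerSeries.C (-1:ℚ) * ell a u)
        = PowerSeries.C (-((p : ℤ) : ℚ)) * ell a u := by
      rw [← mul_assoc, ← map_mul]
      norm_num
    rwa [harg] at this
  | negSucc p =>
    rw [zpow_negSucc, ← inv_pow, Units.val_pow_eq_pow_val]
    refine dv_trans (dv_pow (unit_inv_cong hu hU) (p+1)) ?_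
    have := EE_pow_nat a hell (p+1)
    have harg : PowerSeries.C (((p+1 : ℕ):ℚ)) * ell a u
        = PowerSeries.C (-((Int.negSucc p : ℤ) : ℚ)) * ell a u := by
      have : (((p+1 : ℕ):ℚ)) = -((Int.negSucc p : ℤ) : ℚ) := by
        push_cast [Int.negSucc_eq]
        ring
      rw [this]
    rwa [harg] at this

end units

noncomputable def uu (n : ℕ) : PowerSeries ℚ := (PowerSeries.C (-1) * X)^(n+1)

lemma constantCoeff_uu (n : ℕ) : constantCoeff (uu n) = 0 := by
  simp [uu]

noncomputable def UqU (n : ℕ) : (PowerSeries ℚ)ˣ :=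
  IsUnit.unit (a := (1 : PowerSeries ℚ) - uu n)
    (by
      rw [PowerSeries.isUnit_iff_constantCoeff]
      simp [uu])

lemma UqU_val (n : ℕ) : ((UqU n : (PowerSeries ℚ)ˣ) : PowerSeries ℚ) = 1 - uu n :=
  IsUnit.unit_spec _

lemma dv_prodc {N : ℕ} {ι : Type*} (s : Finset ι) (F G : ι → PowerSeries ℚ)
    (h : ∀ n ∈ s, (X : PowerSeries ℚ)^N ∣ F n - G n) :
    (X : PowerSeries ℚ)^N ∣ (∏ n ∈ s, F n) - (∏ n ∈ s, G n) := by
  classical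
  induction s using Finset.cons_induction with
  | empty => simp
  | cons x s hx ih =>
    rw [Finset.prod_cons, Finset.prod_cons]
    exact dv_mul (h x (Finset.mem_cons_self x s))
      (ih fun n hn => h n (Finset.mem_cons_of_mem hn))

section main
variable (χ : ℤ) (a : ℕ)

noncomputable def SS : PowerSeries ℚ :=
  ∑ n ∈ range a, PowerSeries.C (((((n:ℤ)+1)*χ : ℤ) : ℚ)) * ell a (uu n)

lemma stepA :
    ((macMahonPowCoeff (-1) χ a : ℤ) : ℚ) =
      PowerSeries.coeff a
        ((∏ n ∈ range a, (UqU n)^(-(((n:ℤ)+1)*χ)) : (PowerSeries ℚ)ˣ) : PowerSeries ℚ) := by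
  rw [macMahonPowCoeff]
  set ι := PowerSeries.map (Int.castRingHom ℚ) with hι
  have h1 : ((PowerSeries.coeff a
      (((∏ n ∈ range a, (oneSubUnit (-1) n)^(-(((n:ℤ)+1)*χ))) : (PowerSeries ℤ)ˣ) :
        PowerSeries ℤ) : ℤ) : ℚ)
      = PowerSeries.coeff a (ι ((∏ n ∈ range a, (oneSubUnit (-1) n)^(-(((n:ℤ)+1)*χ)) :
          (PowerSeries ℤ)ˣ) : PowerSeries ℤ)) := by
    rw [hι, PowerSeries.coeff_map]
    rfl
  rw [h1]
  congr 1
  have h2 : Units.map ι.toMonoidHom (∏ n ∈ range a, (oneSubUnit (-1) n)^(-(((n:ℤ)+1)*χ)))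
      = ∏ n ∈ range a, (UqU n)^(-(((n:ℤ)+1)*χ)) := by
    rw [map_prod]
    refine Finset.prod_congr rfl fun n _ => ?_
    rw [map_zpow]
    congr 1
    apply Units.ext
    rw [Units.coe_map]
    have : ((oneSubUnit (-1) n : (PowerSeries ℤ)ˣ) : PowerSeries ℤ)
        = 1 - (PowerSeries.C (-1) * X)^(n+1) := IsUnit.unit_spec _
    rw [this, UqU_val, uu]
    simp only [MonoidHom.coe_coe, map_sub, map_one, map_pow, map_mul, PowerSeries.map_C,
      PowerSeries.map_X, hι]
    norm_num
  rw [← h2, Units.coe_map]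
  rfl

lemma stepB :
    (X : PowerSeries ℚ)^(a+1) ∣
      ((∏ n ∈ range a, (UqU n)^(-(((n:ℤ)+1)*χ)) : (PowerSeries ℚ)ˣ) : PowerSeries ℚ)
        - EE a (SS χ a) := by
  have h1 : ((∏ n ∈ range a, (UqU n)^(-(((n:ℤ)+1)*χ)) : (PowerSeries ℚ)ˣ) : PowerSeries ℚ)
      = ∏ n ∈ range a, (((UqU n)^(-(((n:ℤ)+1)*χ)) : (PowerSeries ℚ)ˣ) : PowerSeries ℚ) :=
    map_prod (Units.coeHom (PowerSeries ℚ)) _ _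
  rw [h1, SS]
  refine dv_trans (dv_prodc (range a) _
    (fun n => EE a (PowerSeries.C (((((n:ℤ)+1)*χ : ℤ) : ℚ)) * ell a (uu n)))
    fun n _ => ?_) (EE_prod_sum a (range a) _ fun n _ => ?_)
  · have := unit_zpow_cong (a := a) (constantCoeff_uu n) (UqU_val n) (-(((n:ℤ)+1)*χ))
    have hc : (-((-(((n:ℤ)+1)*χ) : ℤ) : ℚ)) = (((((n:ℤ)+1)*χ : ℤ) : ℚ)) := by push_cast; ring
    rwa [hc] at this
  · simp [constantCoeff_ell a (constantCoeff_uu n)]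
end main

def ee (q : ℕ × ℕ) : ℕ := (q.1+1)*(q.2+1)

noncomputable def ww (χ : ℤ) (q : ℕ × ℕ) : ℚ :=
  (((q.1:ℚ)+1)*(χ:ℚ)) * ((-1:ℚ)^(ee q) * (((q.2:ℚ)+1))⁻¹)

lemma SS_eq : SS χ a = ∑ q ∈ range a ×ˢ range a, PowerSeries.C (ww χ q) * X^(ee q) := by
  rw [SS, Finset.sum_product]
  refine Finset.sum_congr rfl fun n _ => ?_
  rw [ell, Finset.mul_sum]
  refine Finset.sum_congr rfl fun i _ => ?_
  rw [uu, ← pow_mul, mul_pow, ← map_pow, ← mul_assoc, ← mul_assoc, ← map_mul, ← map_mul]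
  congr 1
  rw [ww, ee]
  push_cast
  ring

lemma coeff_SS_pow (ha : 0 < a) (k : ℕ) :
    PowerSeries.coeff a ((SS χ a)^k) = (-1:ℚ)^a * (χ:ℚ)^k * tupleSum k a := by
  classical
  have hpow : (SS χ a)^k = ∏ _l ∈ (Finset.univ : Finset (Fin k)), SS χ a := by
    rw [Finset.prod_const, Finset.card_univ, Fintype.card_fin]
  rw [hpow, SS_eq]
  rw [Finset.prod_univ_sum]
  rw [map_sum]
  have hterm : ∀ p : Fin k → ℕ × ℕ,
      PowerSeries.coeff a (∏ l, PowerSeries.C (ww χ (p l)) * X^(ee (p l)))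
        = if (∑ l, ee (p l)) = a then ∏ l, ww χ (p l) else 0 := by
    intro p
    rw [Finset.prod_mul_distrib, ← map_prod, Finset.prod_pow_eq_pow_sum,
      PowerSeries.coeff_C_mul, PowerSeries.coeff_X_pow]
    by_cases h : (∑ l, ee (p l)) = a
    · rw [if_pos h, if_pos h.symm, mul_one]
    · rw [if_neg h, if_neg (fun hh => h hh.symm), mul_zero]
  rw [Finset.sum_congr rfl fun p _ => hterm p, ← Finset.sum_filter]
  rw [mul_assoc, tupleSum, Finset.mul_sum, Finset.mul_sum]
  refine Finset.sum_nbij' (i := fun p => fun l => ((p l).1 + 1, (p l).2 + 1))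
    (j := fun f => fun l => ((f l).1 - 1, (f l).2 - 1)) ?_ ?_ ?_ ?_ ?_
  · intro p hp
    rw [Finset.mem_filter] at hp ⊢
    simp only [Finset.mem_filter, Fintype.mem_piFinset, Finset.mem_product, Finset.mem_Icc,
      Finset.mem_range, ee] at hp ⊢
    obtain ⟨hp1, hp2⟩ := hp
    refine ⟨fun l => ?_, ?_⟩
    · have := hp1 l
      omega
    · exact hp2
  · intro f hf
    rw [Finset.mem_filter] at hf ⊢
    simp only [Finset.mem_filter, Fintype.mem_piFinset, Finset.mem_product, Finset.mem_Icc,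
      Finset.mem_range, ee] at hf ⊢
    obtain ⟨hf1, hf2⟩ := hf
    refine ⟨fun l => ?_, ?_⟩
    · have := hf1 l
      omega
    · rw [← hf2]
      refine Finset.sum_congr rfl fun l _ => ?_
      have h := hf1 l
      rw [Nat.sub_add_cancel (by omega), Nat.sub_add_cancel (by omega)]
  · intro p hp
    funext l
    simp
  · intro f hf
    rw [Finset.mem_filter] at hf
    simp only [Finset.mem_filter, Fintype.mem_piFinset, Finset.mem_product, Finset.mem_Icc,
      Finset.mem_range, ee] at hf
    funext l
    have := hf.1 l
    ext <;> simp <;> omega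
  · intro p hp
    rw [Finset.mem_filter] at hp
    obtain ⟨hp1, hp2⟩ := hp
    have hval : ∏ l, ww χ (p l)
        = ((-1:ℚ)^a * (χ:ℚ)^k) * ((∏ l, (((p l).1 : ℚ)+1)) / (∏ l, (((p l).2 : ℚ)+1))) := by
      simp only [ww, Finset.prod_mul_distrib]
      rw [Finset.prod_const, Finset.card_univ, Fintype.card_fin,
        Finset.prod_pow_eq_pow_sum, hp2, Finset.prod_inv_distrib, div_eq_mul_inv]
      ring
    rw [hval]
    push_cast
    ring

/-- For `χ ∈ ℤ` and `a ≥ 1`,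
`(-1)^a ∑_{k=1}^{a} (χ^k/k!) ∑_{∑ n_l i_l = a} (∏ n_l)/(∏ i_l)` equals the coefficient of
`t^a` in `M(-t)^χ`, as rational numbers.  (Tuples with `∑ n_l i_l = a` require `k ≤ a`,
so the outer sum may be truncated at `k = a`.) -/
theorem neg_one_pow_mul_sum_eq_coeff_macMahon (χ : ℤ) (a : ℕ) (ha : 0 < a) :
    (-1 : ℚ) ^ a *
        ∑ k ∈ Finset.Icc 1 a, (χ : ℚ) ^ k / (Nat.factorial k : ℚ) * tupleSum k a =
      (macMahonPowCoeff (-1) χ a : ℚ) := by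
  rw [stepA χ a]
  have hB := stepB χ a
  rw [X_pow_dvd_iff] at hB
  have hco := hB a (lt_add_one a)
  rw [map_sub, sub_eq_zero] at hco
  rw [hco, EE, map_sum]
  simp only [PowerSeries.coeff_C_mul]
  have hins : range (a+1) = insert 0 (Finset.Icc 1 a) := by
    ext x
    simp only [Finset.mem_range, Finset.mem_insert, Finset.mem_Icc]
    omega
  rw [hins, Finset.sum_insert (by simp)]
  have hz : ((Nat.factorial 0 : ℚ))⁻¹ * PowerSeries.coeff a ((SS χ a)^0) = 0 := by
    rw [pow_zero, PowerSeries.coeff_one, if_neg (by omega)]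
    ring
  rw [hz, zero_add, Finset.mul_sum]
  refine Finset.sum_congr rfl fun k _ => ?_
  rw [coeff_SS_pow ha k, div_eq_mul_inv]
  ring
end

section
/- Let χ be an integer and r, a positive integers. Then (−1)^{ra} · ∑_{k=1}^{a} r^{k−2} (χ^k / k!) · ∑ (∏_{l=1}^{k} n_l) / (∏_{l=1}^{k} i_l), where the inner sum runs over all pairs of k-tuples (n_1,…,n_k), (i_1,…,i_k) of positive integers with ∑_{l=1}^{k} n_l i_l = a, equals (1/r²) times the coefficient of t^a in the formal power series M((−1)^r t)^{rχ}, both viewed as rational numbers. -/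
open PowerSeries Finset

namespace MacMahonAux

/-- Exponential of a power series with zero constant term (coefficient-wise definition). -/
noncomputable def E (f : PowerSeries ℚ) : PowerSeries ℚ :=
  PowerSeries.mk fun n => ∑ k ∈ range (n + 1), coeff n (f ^ k) / (Nat.factorial k : ℚ)

lemma coeff_E (f : PowerSeries ℚ) (n : ℕ) :
    coeff n (E f) = ∑ k ∈ range (n + 1), coeff n (f ^ k) / (Nat.factorial k : ℚ) := by
  simp [E, coeff_mk]

lemma coeff_pow_eq_zero {f : PowerSeries ℚ} (hf : constantCoeff f = 0)
    {n k : ℕ} (h : n < k) : coeff n (f ^ k) = 0 := by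
  have hd : (X : PowerSeries ℚ) ^ k ∣ f ^ k :=
    pow_dvd_pow_of_dvd (PowerSeries.X_dvd_iff.2 hf) k
  exact (PowerSeries.X_pow_dvd_iff.1 hd) n h

lemma coeff_E_of_le {f : PowerSeries ℚ} (hf : constantCoeff f = 0) {n N : ℕ} (h : n + 1 ≤ N) :
    coeff n (E f) = ∑ k ∈ range N, coeff n (f ^ k) / (Nat.factorial k : ℚ) := by
  rw [coeff_E]
  apply Finset.sum_subset (Finset.range_subset_range.2 h)
  intro k _ hk
  rw [coeff_pow_eq_zero hf (by simpa using hk), zero_div]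

lemma E_zero : E (0 : PowerSeries ℚ) = 1 := by
  ext n
  rw [coeff_E, Finset.sum_eq_single 0]
  · simp
  · intro k _ hk
    rw [zero_pow hk]
    simp
  · simp

lemma constantCoeff_E {f : PowerSeries ℚ} (hf : constantCoeff f = 0) :
    constantCoeff (E f) = 1 := by
  rw [← coeff_zero_eq_constantCoeff_apply, coeff_E]
  simp

lemma ode_unique {c F G : PowerSeries ℚ} (hF : d⁄dX ℚ F = c * F) (hG : d⁄dX ℚ G = c * G)
    (h0 : constantCoeff F = constantCoeff G) : F = G := by
  ext n
  induction n using Nat.strong_induction_on with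
  | _ n ih =>
    match n with
    | 0 => simpa using h0
    | Nat.succ n =>
      have h1 : coeff n (d⁄dX ℚ F) = coeff n (d⁄dX ℚ G) := by
        rw [hF, hG, coeff_mul, coeff_mul]
        refine Finset.sum_congr rfl fun p hp => ?_
        rw [ih p.2 (by have := Finset.HasAntidiagonal.mem_antidiagonal.1 hp; omega)]
      rw [coeff_derivative, coeff_derivative] at h1
      exact mul_right_cancel₀ (by positivity) h1

lemma derivative_E {f : PowerSeries ℚ} (hf : constantCoeff f = 0) :
    d⁄dX ℚ (E f) = d⁄dX ℚ f * E f := by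
  ext n
  have hR : coeff n (d⁄dX ℚ f * E f)
      = ∑ k ∈ range (n + 1), coeff n (d⁄dX ℚ f * f ^ k) / (Nat.factorial k : ℚ) := by
    rw [coeff_mul]
    have : ∀ p ∈ antidiagonal n,
        coeff p.1 (d⁄dX ℚ f) * coeff p.2 (E f)
          = ∑ k ∈ range (n + 1), coeff p.1 (d⁄dX ℚ f) * coeff p.2 (f ^ k)
              / (Nat.factorial k : ℚ) := by
      intro p hp
      have hle : p.2 + 1 ≤ n + 1 := by
        have := Finset.HasAntidiagonal.mem_antidiagonal.1 hp; omega
      rw [coeff_E_of_le hf hle, Finset.mul_sum]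
      refine Finset.sum_congr rfl fun k _ => ?_
      rw [mul_div_assoc]
    rw [Finset.sum_congr rfl this, Finset.sum_comm]
    refine Finset.sum_congr rfl fun k _ => ?_
    rw [coeff_mul, Finset.sum_div]
  rw [hR, coeff_derivative, coeff_E]
  rw [Finset.sum_mul, Finset.sum_range_succ']
  have hzero : coeff (n + 1) (f ^ 0) / (Nat.factorial 0 : ℚ) * ((n : ℚ) + 1) = 0 := by
    simp [coeff_one]
  rw [hzero, add_zero]
  refine Finset.sum_congr rfl fun j _ => ?_
  have hder : coeff (n + 1) (f ^ (j + 1)) * ((n : ℚ) + 1)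
      = ((j : ℚ) + 1) * coeff n (f ^ j * d⁄dX ℚ f) := by
    have h2 : d⁄dX ℚ (f ^ (j + 1)) = (j + 1) • (f ^ j • d⁄dX ℚ f) := by
      simpa using Derivation.leibniz_pow (d⁄dX ℚ) f (j + 1)
    have h3 := coeff_derivative (f ^ (j + 1)) n
    rw [h2] at h3
    rw [← h3, map_nsmul, smul_eq_mul (a := f ^ j), nsmul_eq_mul]
    push_cast
    ring
  rw [div_mul_eq_mul_div, hder, Nat.factorial_succ]
  push_cast
  rw [mul_div_mul_left _ _ (by positivity : ((j:ℚ)+1) ≠ 0), mul_comm (f ^ j)]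


lemma E_add {f g : PowerSeries ℚ} (hf : constantCoeff f = 0) (hg : constantCoeff g = 0) :
    E (f + g) = E f * E g := by
  have hfg : constantCoeff (f + g) = 0 := by simp [hf, hg]
  refine ode_unique (c := d⁄dX ℚ (f + g)) (derivative_E hfg) ?_ ?_
  · have h : d⁄dX ℚ (E f * E g) = d⁄dX ℚ (E f) * E g + E f * d⁄dX ℚ (E g) := by
      rw [Derivation.leibniz]
      simp only [smul_eq_mul]
      ring
    rw [h, derivative_E hf, derivative_E hg, map_add]
    ring
  · simp [constantCoeff_E hfg, constantCoeff_E hf, constantCoeff_E hg]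

/-- `∑_{i ≥ 1} (c X^d)^i / i`, i.e. `-log(1 - c X^d)`. -/
noncomputable def Lg (c : ℚ) (d : ℕ) : PowerSeries ℚ :=
  PowerSeries.mk fun j => if d ∣ j ∧ j ≠ 0 then c ^ (j / d) / ((j / d : ℕ) : ℚ) else 0

lemma coeff_Lg (c : ℚ) (d : ℕ) (j : ℕ) :
    coeff j (Lg c d) = if d ∣ j ∧ j ≠ 0 then c ^ (j / d) / ((j / d : ℕ) : ℚ) else 0 := by
  simp [Lg, coeff_mk]

lemma constantCoeff_Lg (c : ℚ) (d : ℕ) : constantCoeff (Lg c d) = 0 := by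
  rw [← coeff_zero_eq_constantCoeff_apply, coeff_Lg]
  simp

lemma deriv_Lg (c : ℚ) {d : ℕ} (hd : 0 < d) :
    d⁄dX ℚ (Lg c d) = d⁄dX ℚ (C c * X ^ d) + (C c * X ^ d) * d⁄dX ℚ (Lg c d) := by
  ext j
  rw [map_add, coeff_derivative, coeff_derivative, coeff_C_mul, coeff_X_pow]
  have hmul : coeff j ((C c * X ^ d) * d⁄dX ℚ (Lg c d))
      = c * (if d ≤ j then coeff (j - d) (d⁄dX ℚ (Lg c d)) else 0) := by
    rw [mul_assoc, coeff_C_mul, coeff_X_pow_mul']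
  rw [hmul, coeff_Lg]
  by_cases h1 : d ∣ (j + 1)
  · have hj1 : j + 1 ≠ 0 := by omega
    rw [if_pos ⟨h1, hj1⟩]
    obtain ⟨i, hi⟩ := h1
    have hipos : 0 < i := Nat.pos_of_ne_zero fun h => by subst h; simp at hi
    have hdiv : (j + 1) / d = i := by rw [hi]; exact Nat.mul_div_cancel_left i hd
    rw [hdiv]
    by_cases h2 : i = 1
    · -- j + 1 = d
      subst h2
      have hjd : j + 1 = d := by omega
      have hlt : ¬ d ≤ j := by omega
      rw [if_pos hjd, if_neg hlt, mul_zero, add_zero]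
      simp
    · -- i ≥ 2, so j ≥ d, j - d + 1 = d * (i - 1)
      have hi2 : 2 ≤ i := by omega
      have hne : j + 1 ≠ d := by
        intro h; rw [h] at hi; nlinarith [hd, hi2]
      have hdj : d ≤ j := by nlinarith
      rw [if_neg hne, if_pos hdj, mul_zero, zero_mul, zero_add]
      rw [coeff_derivative, coeff_Lg]
      have hstep : d * i = d * (i - 1) + d := by
        conv_lhs => rw [show i = (i - 1) + 1 by omega]
        rw [Nat.mul_succ]
      have hjd1 : j - d + 1 = d * (i - 1) := by omega
      have h1' : d ∣ (j - d + 1) := ⟨i - 1, hjd1⟩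
      rw [if_pos ⟨h1', by omega⟩]
      have hdiv' : (j - d + 1) / d = i - 1 := by rw [hjd1]; exact Nat.mul_div_cancel_left _ hd
      rw [hdiv']
      have hii : ((i : ℕ) : ℚ) ≠ 0 := Nat.cast_ne_zero.2 (by omega)
      have hcast : ((i - 1 : ℕ) : ℚ) = (i : ℚ) - 1 := by
        push_cast [Nat.cast_sub (by omega : 1 ≤ i)]; ring
      have hi1 : ((i : ℚ) - 1) ≠ 0 := by
        have h2 : (2:ℚ) ≤ (i:ℚ) := by exact_mod_cast hi2
        linarith
      have hcpow : c ^ i = c ^ (i - 1) * c := by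
        rw [← pow_succ]; congr 1; omega
      have hj2 : ((j:ℚ) + 1) = (d:ℚ) * (i:ℚ) := by exact_mod_cast congrArg (Nat.cast : ℕ → ℚ) hi
      have hc3 : (((j - d : ℕ) : ℚ)) + 1 = (d:ℚ) * ((i:ℚ) - 1) := by
        have := congrArg (Nat.cast : ℕ → ℚ) hjd1
        push_cast at this
        rw [Nat.cast_sub hdj] at this ⊢
        linarith
      rw [hcast, hj2, hc3, hcpow]
      field_simp
  · -- d does not divide j + 1
    have hne : ¬ (j + 1 = d) := fun h => h1 ⟨1, by omega⟩
    rw [if_neg (fun h : d ∣ (j+1) ∧ (j+1) ≠ 0 => h1 h.1), if_neg hne, zero_mul, mul_zero,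
      zero_mul, zero_add]
    by_cases hdj : d ≤ j
    · rw [if_pos hdj, coeff_derivative, coeff_Lg]
      have hno : ¬ (d ∣ (j - d + 1) ∧ (j - d + 1) ≠ 0) := by
        rintro ⟨⟨w, hw⟩, -⟩
        exact h1 ⟨w + 1, by rw [Nat.mul_succ]; omega⟩
      rw [if_neg hno]
      ring
    · rw [if_neg hdj, mul_zero]


lemma constantCoeff_smul (a : ℚ) {f : PowerSeries ℚ} (hf : constantCoeff f = 0) :
    constantCoeff (a • f) = 0 := by
  rw [← coeff_zero_eq_constantCoeff_apply, coeff_smul, coeff_zero_eq_constantCoeff_apply, hf,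
    smul_zero]

lemma E_Lg_mul (c : ℚ) {d : ℕ} (hd : 0 < d) :
    E (Lg c d) * (1 - C c * X ^ d) = 1 := by
  have hkey : d⁄dX ℚ (Lg c d) * (1 - C c * X ^ d) = d⁄dX ℚ (C c * X ^ d) := by
    linear_combination deriv_Lg c hd
  refine ode_unique (c := 0) ?_ ?_ ?_
  · rw [zero_mul, Derivation.leibniz]
    simp only [smul_eq_mul]
    rw [derivative_E (constantCoeff_Lg c d)]
    have h1 : d⁄dX ℚ (1 - C c * X ^ d) = - d⁄dX ℚ (C c * X ^ d) := by
      rw [map_sub]; simp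
    rw [h1]
    linear_combination (E (Lg c d)) * hkey
  · simp
  · simp [constantCoeff_E (constantCoeff_Lg c d)]
    omega

lemma E_ne_zero {f : PowerSeries ℚ} (hf : constantCoeff f = 0) : E f ≠ 0 := fun h => by
  have := constantCoeff_E hf
  rw [h] at this
  simp at this

lemma E_neg_Lg (c : ℚ) {d : ℕ} (hd : 0 < d) :
    E (-Lg c d) = 1 - C c * X ^ d := by
  have hc : constantCoeff (Lg c d) = 0 := constantCoeff_Lg c d
  have hc' : constantCoeff (-Lg c d) = 0 := by rw [map_neg, hc, neg_zero]
  refine mul_left_cancel₀ (E_ne_zero hc) ?_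
  rw [← E_add hc hc', add_neg_cancel, E_zero, E_Lg_mul c hd]

lemma E_smul_add (a b : ℚ) (c : ℚ) (d : ℕ) :
    E (a • Lg c d) * E (b • Lg c d) = E ((a + b) • Lg c d) := by
  rw [← E_add (constantCoeff_smul a (constantCoeff_Lg c d))
    (constantCoeff_smul b (constantCoeff_Lg c d)), ← add_smul]

lemma unit_zpow {c : ℚ} {d : ℕ} (hd : 0 < d) (u : (PowerSeries ℚ)ˣ)
    (hu : (u : PowerSeries ℚ) = 1 - C c * X ^ d) (z : ℤ) :
    ((u ^ z : (PowerSeries ℚ)ˣ) : PowerSeries ℚ) = E (((-z : ℤ) : ℚ) • Lg c d) := by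
  have hne : (u : PowerSeries ℚ) = E ((-1 : ℚ) • Lg c d) := by
    rw [neg_one_smul, E_neg_Lg c hd, hu]
  have hinv : ((u⁻¹ : (PowerSeries ℚ)ˣ) : PowerSeries ℚ) = E ((1 : ℚ) • Lg c d) := by
    apply Units.inv_eq_of_mul_eq_one_left
    rw [one_smul, hu, E_Lg_mul c hd]
  induction z using Int.induction_on with
  | zero => norm_num [E_zero]
  | succ p ih =>
    rw [zpow_add_one, Units.val_mul, ih, hne, E_smul_add]
    congr 2
    push_cast
    ring
  | pred p ih =>
    rw [zpow_sub_one, Units.val_mul, ih, hinv, E_smul_add]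
    congr 2
    push_cast
    ring

lemma coe_prod_units {ι : Type*} (s : Finset ι) (u : ι → (PowerSeries ℚ)ˣ)
    (f : ι → PowerSeries ℚ)
    (h0 : ∀ i ∈ s, constantCoeff (f i) = 0)
    (h : ∀ i ∈ s, ((u i : (PowerSeries ℚ)ˣ) : PowerSeries ℚ) = E (f i)) :
    ((∏ i ∈ s, u i : (PowerSeries ℚ)ˣ) : PowerSeries ℚ) = E (∑ i ∈ s, f i) := by
  induction s using Finset.cons_induction with
  | empty => simp [E_zero]
  | cons i s his ih =>
    rw [Finset.prod_cons, Finset.sum_cons, Units.val_mul,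
      ih (fun j hj => h0 j (Finset.mem_cons_of_mem hj))
        (fun j hj => h j (Finset.mem_cons_of_mem hj)),
      h i (Finset.mem_cons_self i s),
      E_add (h0 i (Finset.mem_cons_self i s))]
    rw [map_sum]
    exact Finset.sum_eq_zero fun j hj => h0 j (Finset.mem_cons_of_mem hj)


variable (εq : ℚ) (a : ℕ)

/-- The truncated series `∑_{n<a} (n+1) Lg(ε^{n+1}, n+1)`. -/
noncomputable def T : PowerSeries ℚ :=
  ∑ n ∈ range a, ((n : ℚ) + 1) • Lg (εq ^ (n + 1)) (n + 1)

/-- The finite polynomial version. -/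
noncomputable def T' : PowerSeries ℚ :=
  ∑ p ∈ Finset.Icc 1 a ×ˢ Finset.Icc 1 a,
    C ((p.1 : ℚ) / (p.2 : ℚ) * εq ^ (p.1 * p.2)) * X ^ (p.1 * p.2)

lemma coeff_T_agree {j : ℕ} (hj : j ≤ a) : coeff j (T εq a) = coeff j (T' εq a) := by
  rw [T, T', map_sum, map_sum, Finset.sum_product, ← Finset.Ico_add_one_right_eq_Icc, Finset.sum_Ico_eq_sum_range]
  simp only [Nat.add_sub_cancel]
  refine Finset.sum_congr rfl fun n hn => ?_
  simp only [Finset.mem_range] at hn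
  rw [coeff_smul, coeff_Lg, smul_eq_mul]
  have hco : ∀ y : ℕ,
      coeff j (C (((1 + n : ℕ) : ℚ) / (y : ℚ) * εq ^ ((1 + n) * y)) * X ^ ((1 + n) * y))
        = if j = (1 + n) * y then ((1 + n : ℕ) : ℚ) / (y : ℚ) * εq ^ j else 0 := by
    intro y
    rw [coeff_C_mul, coeff_X_pow, mul_ite, mul_one, mul_zero]
    by_cases h : j = (1 + n) * y
    · rw [if_pos h, if_pos h, ← h]
    · rw [if_neg h, if_neg h]
  rw [Finset.sum_congr rfl fun y _ => hco y]
  by_cases h1 : (n + 1) ∣ j ∧ j ≠ 0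
  · obtain ⟨⟨i, hi⟩, hj0⟩ := h1
    have hipos : 0 < i := Nat.pos_of_ne_zero fun h => by subst h; simp at hi; exact hj0 hi
    have hile : i ≤ a :=
      le_trans (le_trans (Nat.le_mul_of_pos_left i (by omega)) hi.ge) hj
    have hdiv : j / (n + 1) = i := by rw [hi]; exact Nat.mul_div_cancel_left i (by omega)
    rw [if_pos ⟨⟨i, hi⟩, hj0⟩, hdiv]
    have hiff : ∀ y : ℕ, (j = (1 + n) * y) = (y = i) := by
      intro y
      apply propext
      constructor
      · intro h
        refine Nat.eq_of_mul_eq_mul_left (show 0 < 1 + n by omega) ?_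
        rw [← h, hi, Nat.add_comm 1 n]
      · intro h; subst h; rw [hi, Nat.add_comm 1 n]
    simp only [hiff]
    rw [Finset.sum_ite_eq' (Finset.Ico 1 (a + 1)), if_pos (Finset.mem_Ico.2 ⟨hipos, by omega⟩)]
    rw [← pow_mul, ← hi]
    push_cast
    ring
  · rw [if_neg h1, mul_zero]
    refine (Finset.sum_eq_zero fun y hy => ?_).symm
    simp only [Finset.mem_Ico] at hy
    rw [if_neg]
    intro h
    have hj0 : j ≠ 0 := by
      have : 0 < j := by rw [h]; exact Nat.mul_pos (by omega) (by omega)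
      omega
    exact h1 ⟨⟨y, by rw [h, Nat.add_comm]⟩, hj0⟩

lemma coeff_pow_congr {A B : PowerSeries ℚ} {a : ℕ}
    (h : ∀ j ≤ a, coeff j A = coeff j B) (k : ℕ) :
    ∀ j ≤ a, coeff j (A ^ k) = coeff j (B ^ k) := by
  induction k with
  | zero => intro j _; rfl
  | succ k ih =>
    intro j hj
    rw [pow_succ, pow_succ, coeff_mul, coeff_mul]
    refine Finset.sum_congr rfl fun p hp => ?_
    have hp' := Finset.HasAntidiagonal.mem_antidiagonal.1 hp
    rw [ih p.1 (by omega), h p.2 (by omega)]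

lemma coeff_T'_pow (k : ℕ) :
    coeff a ((T' εq a) ^ k) = εq ^ a * tupleSum k a := by
  rw [T', Finset.sum_pow', map_sum, tupleSum, Finset.sum_filter, Finset.mul_sum]
  refine Finset.sum_congr rfl fun f hf => ?_
  have hprod : ∏ l, C (((f l).1 : ℚ) / ((f l).2 : ℚ) * εq ^ ((f l).1 * (f l).2))
        * X ^ ((f l).1 * (f l).2)
      = C (∏ l, ((f l).1 : ℚ) / ((f l).2 : ℚ) * εq ^ ((f l).1 * (f l).2))
        * X ^ (∑ l, (f l).1 * (f l).2) := by
    rw [Finset.prod_mul_distrib, map_prod, Finset.prod_pow_eq_pow_sum]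
  rw [hprod, coeff_C_mul, coeff_X_pow]
  by_cases hs : ∑ l, (f l).1 * (f l).2 = a
  · rw [if_pos hs.symm, if_pos hs, mul_one]
    rw [Finset.prod_mul_distrib, Finset.prod_pow_eq_pow_sum, hs, Finset.prod_div_distrib]
    ring
  · rw [if_neg (fun h => hs h.symm), if_neg hs, mul_zero, mul_zero]


lemma tupleSum_zero {a : ℕ} (ha : 0 < a) : tupleSum 0 a = 0 := by
  rw [tupleSum]
  convert Finset.sum_empty
  rw [Finset.filter_eq_empty_iff]
  intro f _
  simp
  omega

lemma key (εq : ℚ) (m : ℤ) (a : ℕ) (ha : 0 < a) (v : ℕ → (PowerSeries ℚ)ˣ)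
    (hv : ∀ n, (v n : PowerSeries ℚ) = 1 - C (εq ^ (n + 1)) * X ^ (n + 1)) :
    coeff a ((∏ n ∈ range a, (v n) ^ (-(((n : ℤ) + 1) * m)) : (PowerSeries ℚ)ˣ) : PowerSeries ℚ)
      = εq ^ a * ∑ k ∈ Finset.Icc 1 a,
          (m : ℚ) ^ k / (Nat.factorial k : ℚ) * tupleSum k a := by
  have hcoe : ((∏ n ∈ range a, (v n) ^ (-(((n : ℤ) + 1) * m)) : (PowerSeries ℚ)ˣ) : PowerSeries ℚ)
      = E (∑ n ∈ range a, (((n : ℚ) + 1) * (m : ℚ)) • Lg (εq ^ (n + 1)) (n + 1)) := by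
    refine coe_prod_units _ _ _
      (fun n _ => constantCoeff_smul _ (constantCoeff_Lg _ _)) ?_
    intro n _
    rw [unit_zpow (Nat.succ_pos n) (v n) (hv n)]
    have hz : (((-(-(((n : ℤ) + 1) * m)) : ℤ) : ℚ)) = ((n : ℚ) + 1) * (m : ℚ) := by
      push_cast; ring
    rw [hz]
  have hS : (∑ n ∈ range a, (((n : ℚ) + 1) * (m : ℚ)) • Lg (εq ^ (n + 1)) (n + 1))
      = C (m : ℚ) * T εq a := by
    rw [T, Finset.mul_sum]
    refine Finset.sum_congr rfl fun n _ => ?_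
    rw [smul_eq_C_mul, smul_eq_C_mul, ← mul_assoc, ← map_mul, mul_comm ((n : ℚ) + 1) (m : ℚ)]
  have hcoeffk : ∀ k, coeff a ((C (m : ℚ) * T εq a) ^ k)
      = (m : ℚ) ^ k * (εq ^ a * tupleSum k a) := by
    intro k
    rw [mul_pow, ← map_pow, coeff_C_mul,
      coeff_pow_congr (fun j hj => coeff_T_agree εq a hj) k a le_rfl, coeff_T'_pow]
  rw [hcoe, hS, coeff_E]
  simp only [hcoeffk]
  have hsub : Finset.Icc 1 a ⊆ range (a + 1) := by
    intro x hx
    simp only [Finset.mem_Icc] at hx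
    simp only [Finset.mem_range]
    omega
  rw [← Finset.sum_subset hsub (fun x hx hx' => ?_), Finset.mul_sum]
  · refine Finset.sum_congr rfl fun k _ => ?_
    ring
  · have hx0 : x = 0 := by
      simp only [Finset.mem_range] at hx
      simp only [Finset.mem_Icc] at hx'
      omega
    subst hx0
    rw [tupleSum_zero ha]
    ring

end MacMahonAux

open MacMahonAux in
/-- For `χ ∈ ℤ` and positive integers `r`, `a`,
`(-1)^{ra} ∑_{k=1}^{a} r^{k-2} (χ^k/k!) ∑_{∑ n_l i_l = a} (∏ n_l)/(∏ i_l)` equals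
`1/r²` times the coefficient of `t^a` in `M((-1)^r t)^{rχ}`, as rational numbers.
(Tuples with `∑ n_l i_l = a` require `k ≤ a`, so the outer sum may be truncated at
`k = a`.) -/
theorem neg_one_pow_mul_sum_eq_coeff_macMahon_rank (χ : ℤ) (r a : ℕ)
    (hr : 0 < r) (ha : 0 < a) :
    (-1 : ℚ) ^ (r * a) *
        ∑ k ∈ Finset.Icc 1 a,
          (r : ℚ) ^ ((k : ℤ) - 2) * ((χ : ℚ) ^ k / (Nat.factorial k : ℚ)) * tupleSum k a =
      (1 / (r : ℚ) ^ 2) * (macMahonPowCoeff ((-1) ^ r) ((r : ℤ) * χ) a : ℚ) := by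
  have hr0 : (r : ℚ) ≠ 0 := Nat.cast_ne_zero.2 hr.ne'
  set εq : ℚ := (-1 : ℚ) ^ r with hεq
  set m : ℤ := (r : ℤ) * χ with hm
  set φ : PowerSeries ℤ →* PowerSeries ℚ :=
    (PowerSeries.map (Int.castRingHom ℚ)).toMonoidHom with hφ
  have hv : ∀ n, ((Units.map φ (oneSubUnit ((-1) ^ r) n) : (PowerSeries ℚ)ˣ) : PowerSeries ℚ)
      = 1 - PowerSeries.C (εq ^ (n + 1)) * PowerSeries.X ^ (n + 1) := by
    intro n
    rw [Units.coe_map]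
    show PowerSeries.map (Int.castRingHom ℚ)
      ((oneSubUnit ((-1) ^ r) n : (PowerSeries ℤ)ˣ) : PowerSeries ℤ) = _
    rw [show ((oneSubUnit ((-1) ^ r) n : (PowerSeries ℤ)ˣ) : PowerSeries ℤ)
        = 1 - (PowerSeries.C ((-1) ^ r) * PowerSeries.X) ^ (n + 1) from IsUnit.unit_spec _]
    rw [map_sub, map_one, map_pow, map_mul, PowerSeries.map_C, PowerSeries.map_X]
    have hc : (Int.castRingHom ℚ) ((-1) ^ r) = εq := by
      rw [hεq]; simp
    rw [hc, mul_pow, ← map_pow]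
  have hmac : ((macMahonPowCoeff ((-1) ^ r) m a : ℤ) : ℚ)
      = εq ^ a * ∑ k ∈ Finset.Icc 1 a,
          (m : ℚ) ^ k / (Nat.factorial k : ℚ) * tupleSum k a := by
    rw [macMahonPowCoeff, ← key εq m a ha (fun n => Units.map φ (oneSubUnit ((-1) ^ r) n)) hv]
    have h1 : ((((coeff a) (↑(∏ n ∈ range a,
          oneSubUnit ((-1) ^ r) n ^ (-(((n : ℤ) + 1) * m))) : PowerSeries ℤ)) : ℤ) : ℚ)
        = coeff a (φ (↑(∏ n ∈ range a,
            oneSubUnit ((-1) ^ r) n ^ (-(((n : ℤ) + 1) * m))) : PowerSeries ℤ)) := by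
      simp [hφ, PowerSeries.coeff_map]
    rw [h1]
    congr 1
    rw [← Units.coe_map, map_prod]
    congr 1
    refine Finset.prod_congr rfl fun n _ => ?_
    rw [map_zpow]
  rw [hmac]
  have hεa : εq ^ a = (-1 : ℚ) ^ (r * a) := by rw [hεq, ← pow_mul]
  rw [hεa, mul_comm (1 / (r : ℚ) ^ 2), mul_assoc]
  congr 1
  rw [mul_comm _ (1 / (r : ℚ) ^ 2), Finset.mul_sum]
  refine Finset.sum_congr rfl fun k hk => ?_
  have hzp : (r : ℚ) ^ ((k : ℤ) - 2) = (r : ℚ) ^ k / (r : ℚ) ^ 2 := by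
    rw [zpow_sub₀ hr0, zpow_natCast, show ((2 : ℤ)) = ((2 : ℕ) : ℤ) from rfl, zpow_natCast]
  rw [hzp, hm]
  push_cast
  rw [mul_pow]
  field_simp
end

section
/- For every positive integer s, the sum over all ordered partitions q = (q_1,…,q_k) of s of (−1)^{k} / (q_1! · q_2! ⋯ q_k!) equals (−1)^s / s!, as rational numbers. -/
private lemma headI_cons_tail' {l : List ℕ} (h : l ≠ []) : l.headI :: l.tail = l := by
  cases l <;> simp_all

/-- Splitting off the first block of a composition of `s+1`. -/
def compSuccEquiv (s : ℕ) : Composition (s+1) ≃ Σ j : Fin (s+1), Composition (s - j) where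
  toFun c :=
    have hne : c.blocks ≠ [] := by
      intro h
      have hsum := c.blocks_sum
      rw [h] at hsum
      simp at hsum
    have h1 : 1 ≤ c.blocks.headI := c.blocks_pos (by
      rw [← headI_cons_tail' hne]; exact List.mem_cons_self)
    have h2 : c.blocks.headI ≤ s + 1 := by
      have hsum := c.blocks_sum
      rw [← headI_cons_tail' hne, List.sum_cons] at hsum
      omega
    ⟨⟨c.blocks.headI - 1, by omega⟩,
      ⟨c.blocks.tail,
        fun hi => c.blocks_pos (List.mem_of_mem_tail hi),
        by
          have hsum := c.blocks_sum
          rw [← headI_cons_tail' hne, List.sum_cons] at hsum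
          simp only
          omega⟩⟩
  invFun p :=
    ⟨(p.1.1 + 1) :: p.2.blocks,
      by
        intro i hi
        rcases List.mem_cons.1 hi with h | h
        · omega
        · exact p.2.blocks_pos h,
      by
        have hsum := p.2.blocks_sum
        have := p.1.2
        simp only [List.sum_cons, hsum]
        omega⟩
  left_inv c := by
    have hne : c.blocks ≠ [] := by
      intro h
      have hsum := c.blocks_sum
      rw [h] at hsum
      simp at hsum
    have h1 : 1 ≤ c.blocks.headI := c.blocks_pos (by
      rw [← headI_cons_tail' hne]; exact List.mem_cons_self)
    apply Composition.ext
    simp only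
    rw [show c.blocks.headI - 1 + 1 = c.blocks.headI by omega]
    exact headI_cons_tail' hne
  right_inv p := rfl

/-- The key identity, valid for all `s` (including `s = 0`). -/
lemma sum_comp_aux : ∀ s : ℕ,
    ∑ q : Composition s,
        (-1 : ℚ) ^ q.length / (q.blocks.map fun x => (Nat.factorial x : ℚ)).prod =
      (-1 : ℚ) ^ s / (Nat.factorial s : ℚ) := by
  intro s
  induction s using Nat.strong_induction_on with
  | _ s ih =>
    match s with
    | 0 =>
      rw [show (Finset.univ : Finset (Composition 0)) = {Composition.ones 0} by
        apply Finset.eq_singleton_iff_unique_mem.2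
        refine ⟨Finset.mem_univ _, fun c _ => ?_⟩
        apply Composition.ext
        have hsum := c.blocks_sum
        cases hb : c.blocks with
        | nil => simp [hb, Composition.ones]
        | cons a t =>
          exfalso
          have hpos := c.blocks_pos (hb ▸ (List.mem_cons_self : a ∈ a :: t))
          rw [hb, List.sum_cons] at hsum
          omega]
      simp [Composition.ones, Composition.length]
    | (t+1) =>
      rw [← Equiv.sum_comp (compSuccEquiv t).symm]
      rw [← Finset.univ_sigma_univ, Finset.sum_sigma]
      have hterm : ∀ (j : Fin (t+1)) (d : Composition (t - j)),
          (-1 : ℚ) ^ ((compSuccEquiv t).symm ⟨j, d⟩).length /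
            (((compSuccEquiv t).symm ⟨j, d⟩).blocks.map
              fun x => (Nat.factorial x : ℚ)).prod
          = (-1 / (Nat.factorial (j.1+1) : ℚ)) *
            ((-1 : ℚ) ^ d.length / (d.blocks.map fun x => (Nat.factorial x : ℚ)).prod) := by
        intro j d
        have hb : ((compSuccEquiv t).symm ⟨j, d⟩).blocks = (j.1 + 1) :: d.blocks := rfl
        have hl : ((compSuccEquiv t).symm ⟨j, d⟩).length = d.length + 1 := by
          simp [Composition.length, hb]
        rw [hb, hl, List.map_cons, List.prod_cons, pow_succ]
        have h1 : ((Nat.factorial (j.1+1) : ℚ)) ≠ 0 := by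
          exact_mod_cast Nat.factorial_ne_zero _
        field_simp
      calc ∑ j : Fin (t+1), ∑ d : Composition (t - j),
            (-1 : ℚ) ^ ((compSuccEquiv t).symm ⟨j, d⟩).length /
              (((compSuccEquiv t).symm ⟨j, d⟩).blocks.map
                fun x => (Nat.factorial x : ℚ)).prod
          = ∑ j : Fin (t+1), (-1 / (Nat.factorial (j.1+1) : ℚ)) *
              ((-1 : ℚ) ^ (t - j.1) / (Nat.factorial (t - j.1) : ℚ)) := by
            apply Finset.sum_congr rfl
            intro j _
            rw [Finset.sum_congr rfl (fun d _ => hterm j d), ← Finset.mul_sum,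
              ih (t - j.1) (by omega)]
        _ = (-1 : ℚ) ^ (t+1) / (Nat.factorial (t+1) : ℚ) := by
            have key : ∑ j ∈ Finset.range (t+1),
                (-1:ℚ)^j * ((t+1).choose (j+1) : ℚ) = 1 := by
              have h := Int.alternating_sum_range_choose_of_ne
                (n := t+1) (by omega)
              have h' : ((∑ i ∈ Finset.range (t+2),
                  (-1:ℤ)^i * ((t+1).choose i : ℤ) : ℤ) : ℚ) = 0 := by
                rw [h]; simp
              push_cast at h'
              rw [Finset.sum_range_succ'] at h'
              simp only [pow_zero, Nat.choose_zero_right, one_mul, Nat.cast_one] at h'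
              have h3 : ∑ k ∈ Finset.range (t+1),
                  (-1:ℚ)^(k+1) * ((t+1).choose (k+1):ℚ)
                  = ∑ k ∈ Finset.range (t+1),
                    -((-1:ℚ)^k * ((t+1).choose (k+1):ℚ)) :=
                Finset.sum_congr rfl (fun k _ => by ring)
              rw [h3, Finset.sum_neg_distrib] at h'
              linarith
            rw [Finset.sum_fin_eq_sum_range]
            have hstep : ∀ j ∈ Finset.range (t+1),
                (if h : j < t + 1 then
                  (-1 / (Nat.factorial (j+1) : ℚ)) *
                    ((-1 : ℚ) ^ (t - j) / (Nat.factorial (t - j) : ℚ))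
                 else 0)
                = (-(-1:ℚ)^t / (Nat.factorial (t+1) : ℚ)) *
                    ((-1:ℚ)^j * ((t+1).choose (j+1) : ℚ)) := by
              intro j hj
              rw [Finset.mem_range] at hj
              rw [dif_pos hj]
              have hch : (((t+1).choose (j+1) : ℕ) : ℚ) =
                  (Nat.factorial (t+1) : ℚ) /
                    ((Nat.factorial (j+1) : ℚ) * (Nat.factorial (t - j) : ℚ)) := by
                have he : t + 1 - (j + 1) = t - j := by omega
                have hc := Nat.cast_choose (K := ℚ) (a := j+1) (b := t+1) (by omega)
                rw [he] at hc
                exact hc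
              have hsign : (-1:ℚ) ^ (t - j) * (-1:ℚ)^j = (-1:ℚ)^t := by
                rw [← pow_add]
                congr 1
                omega
              have hf1 : (Nat.factorial (j+1) : ℚ) ≠ 0 := by
                exact_mod_cast Nat.factorial_ne_zero _
              have hf2 : (Nat.factorial (t-j) : ℚ) ≠ 0 := by
                exact_mod_cast Nat.factorial_ne_zero _
              have hf3 : (Nat.factorial (t+1) : ℚ) ≠ 0 := by
                exact_mod_cast Nat.factorial_ne_zero _
              rw [hch]
              field_simp
              rw [← hsign]
              ring_nf
              rw [mul_comm j 2, pow_mul]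
              norm_num
            rw [Finset.sum_congr rfl hstep, ← Finset.mul_sum, key, mul_one,
              pow_succ]
            ring

/-- For every positive integer `s`, the sum over all ordered partitions (compositions)
`q = (q_1,…,q_k)` of `s` of `(-1)^k / (q_1! ⋯ q_k!)` equals `(-1)^s / s!`, as rational
numbers. -/
theorem sum_compositions_neg_one_pow_div_factorials (s : ℕ) (hs : 0 < s) :
    ∑ q : Composition s,
        (-1 : ℚ) ^ q.length / (q.blocks.map fun x => (Nat.factorial x : ℚ)).prod =
      (-1 : ℚ) ^ s / (Nat.factorial s : ℚ) := by
  exact sum_comp_aux s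
end

section
/- For vectors ξ = (a,r), η = (a',r') in ℤ², let ⟨ξ,η⟩ = a r' − r a', and set B(ξ,η) = (−1)^{⟨ξ,η⟩}·⟨ξ,η⟩ ∈ ℤ. Then for all ξ, η, ζ ∈ ℤ² the Jacobi relation B(η,ζ)·B(ξ, η+ζ) + B(ζ,ξ)·B(η, ζ+ξ) + B(ξ,η)·B(ζ, ξ+η) = 0 holds; consequently the bracket [e_ξ, e_η] = B(ξ,η) e_{ξ+η} on the free module with basis indexed by ℤ² satisfies the Jacobi identity. -/
/-- The standard antisymmetric bilinear form on `ℤ²`: `⟨(a,r),(a',r')⟩ = a r' - r a'`. -/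
def symplPair (ξ η : ℤ × ℤ) : ℤ := ξ.1 * η.2 - ξ.2 * η.1

/-- The structure constants `B(ξ,η) = (-1)^{⟨ξ,η⟩} ⟨ξ,η⟩`. -/
def structConst (ξ η : ℤ × ℤ) : ℤ := (symplPair ξ η).negOnePow * symplPair ξ η

/-- The bracket `[e_ξ, e_η] = B(ξ,η) e_{ξ+η}`, extended bilinearly to the free `ℤ`-module
with basis indexed by `ℤ²` (elements being finitely supported functions `ℤ² → ℤ`, with
`e_ξ = single ξ 1`). -/
noncomputable def bracket (x y : (ℤ × ℤ) →₀ ℤ) : (ℤ × ℤ) →₀ ℤ :=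
  x.sum fun ξ cξ => y.sum fun η cη =>
    Finsupp.single (ξ + η) (cξ * cη * structConst ξ η)

lemma symplPair_add_right (ξ η ζ : ℤ × ℤ) :
    symplPair ξ (η + ζ) = symplPair ξ η + symplPair ξ ζ := by
  simp [symplPair]; ring

lemma symplPair_antisymm (ξ η : ℤ × ℤ) : symplPair ξ η = -symplPair η ξ := by
  simp [symplPair]; ring

lemma jac (ξ η ζ : ℤ × ℤ) :
    structConst η ζ * structConst ξ (η + ζ) +
      structConst ζ ξ * structConst η (ζ + ξ) +
      structConst ξ η * structConst ζ (ξ + η) = 0 := by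
  set s1 := symplPair η ζ with hs1
  set s2 := symplPair ζ ξ with hs2
  set s3 := symplPair ξ η with hs3
  have h1 : symplPair ξ (η + ζ) = s3 - s2 := by
    rw [symplPair_add_right, hs3, hs2, symplPair_antisymm ξ ζ]; ring
  have h2 : symplPair η (ζ + ξ) = s1 - s3 := by
    rw [symplPair_add_right, hs1, hs3, symplPair_antisymm η ξ]; ring
  have h3 : symplPair ζ (ξ + η) = s2 - s1 := by
    rw [symplPair_add_right, hs2, hs1, symplPair_antisymm ζ η]; ring
  have e1 : (s3 - s2).negOnePow = s2.negOnePow * s3.negOnePow := by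
    rw [Int.negOnePow_sub, mul_comm]
  have e2 : (s1 - s3).negOnePow = s3.negOnePow * s1.negOnePow := by
    rw [Int.negOnePow_sub, mul_comm]
  have e3 : (s2 - s1).negOnePow = s1.negOnePow * s2.negOnePow := by
    rw [Int.negOnePow_sub, mul_comm]
  simp only [structConst, h1, h2, h3, e1, e2, e3, Units.val_mul]
  ring

lemma bracket_zero_left (y : (ℤ × ℤ) →₀ ℤ) : bracket 0 y = 0 := by
  simp [bracket]

lemma bracket_zero_right (x : (ℤ × ℤ) →₀ ℤ) : bracket x 0 = 0 := by
  simp [bracket]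

lemma bracket_single_single (ξ η : ℤ × ℤ) (a b : ℤ) :
    bracket (Finsupp.single ξ a) (Finsupp.single η b) =
      Finsupp.single (ξ + η) (a * b * structConst ξ η) := by
  rw [bracket, Finsupp.sum_single_index, Finsupp.sum_single_index] <;>
    simp [Finsupp.sum_single_index]

lemma bracket_add_left (x x' y : (ℤ × ℤ) →₀ ℤ) :
    bracket (x + x') y = bracket x y + bracket x' y := by
  rw [bracket, bracket, bracket, Finsupp.sum_add_index]
  · intro ξ _; simp
  · intro ξ _ b₁ b₂
    rw [← Finsupp.sum_add]
    congr 1; funext η cη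
    rw [← Finsupp.single_add]; congr 1; ring

lemma bracket_add_right (x y y' : (ℤ × ℤ) →₀ ℤ) :
    bracket x (y + y') = bracket x y + bracket x y' := by
  rw [bracket, bracket, bracket, ← Finsupp.sum_add]
  congr 1; funext ξ cξ
  rw [Finsupp.sum_add_index]
  · intro η _; simp
  · intro η _ b₁ b₂
    rw [← Finsupp.single_add]; congr 1; ring

/-- The Jacobi relation for the structure constants
`B(ξ,η) = (-1)^{⟨ξ,η⟩} ⟨ξ,η⟩` on `ℤ²`:
`B(η,ζ)B(ξ,η+ζ) + B(ζ,ξ)B(η,ζ+ξ) + B(ξ,η)B(ζ,ξ+η) = 0`; consequently the bracket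
`[e_ξ, e_η] = B(ξ,η) e_{ξ+η}` on the free module with basis indexed by `ℤ²` satisfies
the Jacobi identity. -/
theorem structConst_jacobi :
    (∀ ξ η ζ : ℤ × ℤ,
        structConst η ζ * structConst ξ (η + ζ) +
            structConst ζ ξ * structConst η (ζ + ξ) +
            structConst ξ η * structConst ζ (ξ + η) = 0) ∧
      (∀ x y z : (ℤ × ℤ) →₀ ℤ,
        bracket x (bracket y z) + bracket y (bracket z x) + bracket z (bracket x y) = 0) := by
  refine ⟨jac, ?_⟩
  intro x y z
  induction x using Finsupp.induction with
  | zero => simp [bracket_zero_left, bracket_zero_right, bracket_add_right]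
  | single_add ξ a x _ _ ihx =>
    rw [bracket_add_left, bracket_add_right, bracket_add_left, bracket_add_right,
      bracket_add_right]
    rw [show ∀ A B C D E F : (ℤ × ℤ) →₀ ℤ,
        A + B + (C + D) + (E + F) = (A + C + E) + (B + D + F) from by intros; abel]
    rw [ihx, add_zero]
    clear ihx
    induction y using Finsupp.induction with
    | zero => simp [bracket_zero_left, bracket_zero_right, bracket_add_right]
    | single_add η b y _ _ ihy =>
      rw [bracket_add_left, bracket_add_right, bracket_add_left, bracket_add_right,
        bracket_add_right]
      rw [show ∀ A B C D E F : (ℤ × ℤ) →₀ ℤ,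
          A + B + (C + D) + (E + F) = (A + C + E) + (B + D + F) from by intros; abel]
      rw [ihy, add_zero]
      clear ihy
      induction z using Finsupp.induction with
      | zero => simp [bracket_zero_left, bracket_zero_right, bracket_add_right]
      | single_add ζ c z _ _ ihz =>
        rw [bracket_add_left, bracket_add_right, bracket_add_left, bracket_add_right,
          bracket_add_right]
        rw [show ∀ A B C D E F : (ℤ × ℤ) →₀ ℤ,
            A + B + (C + D) + (E + F) = (A + C + E) + (B + D + F) from by intros; abel]
        rw [ihz, add_zero]
        rw [bracket_single_single, bracket_single_single, bracket_single_single,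
          bracket_single_single, bracket_single_single, bracket_single_single]
        rw [show η + (ζ + ξ) = ξ + (η + ζ) from by abel,
          show ζ + (ξ + η) = ξ + (η + ζ) from by abel,
          ← Finsupp.single_add, ← Finsupp.single_add]
        convert Finsupp.single_zero (M := ℤ) (ξ + (η + ζ)) using 1
        congr 1
        linear_combination (a * b * c) * jac ξ η ζ
end

section
/- Let χ be an integer, i a positive even integer, and ξ an odd positive integer. Then the generalized binomial coefficient C(2iχ − 1 + ξ, ξ) is divisible by 4. -/
lemma cop4odd (k : ℕ) (h : Odd k) : Nat.Coprime 4 k :=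
  (show (4:ℕ) = 2 ^ 2 from rfl) ▸ (Nat.coprime_two_left.mpr h).pow_left 2

lemma four_dvd_nat_choose (N ξ : ℕ) (h4 : 4 ∣ N) (hodd : Odd ξ) : 4 ∣ N.choose ξ := by
  obtain ⟨s, rfl⟩ := hodd
  rcases N with _ | M
  · simp [Nat.choose_eq_zero_of_lt]
  · have key := Nat.add_one_mul_choose_eq M (2 * s)
    have h1 : 4 ∣ (M + 1).choose (2 * s + 1) * (2 * s + 1) := by
      rw [← key]; exact Dvd.dvd.mul_right h4 _
    exact (cop4odd _ ⟨s, rfl⟩).dvd_of_dvd_mul_right h1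

lemma lemA (t N : ℕ) (h4 : 4 ∣ N) : 4 ∣ (N + 4 * t).choose (4 * t + 1) := by
  rcases N with _ | M
  · simp [Nat.choose_eq_zero_of_lt]
  · have key := Nat.add_one_mul_choose_eq (M + 4 * t) (4 * t)
    have h1 : 4 ∣ (M + 4 * t + 1).choose (4 * t + 1) * (4 * t + 1) := by
      rw [← key]
      exact Dvd.dvd.mul_right (by omega) _
    have := (cop4odd (4 * t + 1) ⟨2 * t, by ring⟩).dvd_of_dvd_mul_right h1
    have he : M + 1 + 4 * t = M + 4 * t + 1 := by omega
    rw [he]; exact this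

lemma lemB (t N : ℕ) (h4 : 4 ∣ N) : 4 ∣ (N + (4 * t + 2)).choose (4 * t + 3) := by
  rcases N with _ | M
  · simp [Nat.choose_eq_zero_of_lt]
  · -- step 1
    have s1 : 4 ∣ (M + 1 + 4 * t).choose (4 * t + 1) := lemA t (M + 1) h4
    -- step 2: 2 ∣ choose (M+1+4t+1) (4t+2)
    have key2 := Nat.add_one_mul_choose_eq (M + 1 + 4 * t) (4 * t + 1)
    have h2 : 4 ∣ (M + 1 + 4 * t + 1).choose (4 * t + 2) * (4 * t + 2) := by
      rw [← key2]; exact Dvd.dvd.mul_left s1 _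
    have h2' : 2 ∣ (M + 1 + 4 * t + 1).choose (4 * t + 2) * (2 * t + 1) := by
      have : (M + 1 + 4 * t + 1).choose (4 * t + 2) * (4 * t + 2)
           = 2 * ((M + 1 + 4 * t + 1).choose (4 * t + 2) * (2 * t + 1)) := by ring
      omega
    have s2 : 2 ∣ (M + 1 + 4 * t + 1).choose (4 * t + 2) :=
      (Nat.coprime_two_left.mpr ⟨t, by ring⟩).dvd_of_dvd_mul_right h2'
    -- step 3
    have key3 := Nat.add_one_mul_choose_eq (M + 1 + 4 * t + 1) (4 * t + 2)
    have h3 : 4 ∣ (M + 1 + 4 * t + 2).choose (4 * t + 3) * (4 * t + 3) := by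
      rw [← key3]
      have hev : 2 ∣ (M + 1 + 4 * t + 1).succ := by omega
      have := mul_dvd_mul hev s2
      simpa using this
    have := (cop4odd (4 * t + 3) ⟨2 * t + 1, by ring⟩).dvd_of_dvd_mul_right h3
    have he : M + 1 + (4 * t + 2) = M + 1 + 4 * t + 2 := by omega
    rw [he]; exact this

lemma lemC (N ξ : ℕ) (h4 : 4 ∣ N) (hodd : Odd ξ) : 4 ∣ (N + ξ - 1).choose ξ := by
  obtain ⟨s, rfl⟩ := hodd
  rcases Nat.even_or_odd s with ⟨t, rfl⟩ | ⟨t, rfl⟩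
  · have := lemA t N h4
    have he1 : N + (2 * (t + t) + 1) - 1 = N + 4 * t := by omega
    have he2 : 2 * (t + t) + 1 = 4 * t + 1 := by omega
    rw [he1, he2]; exact this
  · have := lemB t N h4
    have he1 : N + (2 * (2 * t + 1) + 1) - 1 = N + (4 * t + 2) := by omega
    have he2 : 2 * (2 * t + 1) + 1 = 4 * t + 3 := by omega
    rw [he1, he2]; exact this

open Polynomial in
lemma ring_choose_reflect (m k : ℕ) :
    Ring.choose (-(m : ℤ) + k - 1) k = (-1) ^ k * (m.choose k : ℤ) := by
  have hfac : (k.factorial : ℤ) ≠ 0 := Int.natCast_ne_zero.mpr k.factorial_ne_zero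
  apply mul_left_cancel₀ hfac
  have h1 := Ring.descPochhammer_eq_factorial_smul_choose (R := ℤ) (-(m : ℤ) + k - 1) k
  rw [← Polynomial.eval_eq_smeval] at h1
  rw [nsmul_eq_mul] at h1
  rw [← h1, descPochhammer_eval_eq_ascPochhammer]
  have h2 : (-(m : ℤ) + k - 1 - k + 1) = -(m : ℤ) := by ring
  rw [h2, ascPochhammer_eval_neg_eq_descPochhammer,
    descPochhammer_eval_eq_descFactorial ℤ m k,
    Nat.descFactorial_eq_factorial_mul_choose]
  push_cast
  ring

/-- For `χ ∈ ℤ`, `i` a positive even integer and `ξ` an odd positive integer, the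
generalized binomial coefficient `C(2iχ - 1 + ξ, ξ)` is divisible by `4`. -/
theorem four_dvd_choose_odd (χ : ℤ) (i ξ : ℕ) (hi : 0 < i) (hieven : 2 ∣ i)
    (hξ : 0 < ξ) (hodd : Odd ξ) :
    4 ∣ Ring.choose (2 * (i : ℤ) * χ - 1 + (ξ : ℤ)) ξ := by
  set n : ℤ := 2 * (i : ℤ) * χ with hn
  obtain ⟨j, hj⟩ := hieven
  have h4n : (4 : ℤ) ∣ n := ⟨(j : ℤ) * χ, by rw [hn, hj]; push_cast; ring⟩
  have hx : 2 * (i : ℤ) * χ - 1 + (ξ : ℤ) = n + ξ - 1 := by rw [hn]; ring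
  rw [hx]
  rcases le_or_gt 0 (n + ξ - 1) with hge | hlt
  · obtain ⟨a, ha⟩ := Int.eq_ofNat_of_zero_le hge
    rw [ha, Ring.choose_natCast]
    rcases le_or_gt n 0 with hn0 | hn0
    · have hlt' : a < ξ := by omega
      rw [Nat.choose_eq_zero_of_lt hlt']
      exact dvd_zero 4
    · obtain ⟨N, hN⟩ : ∃ N : ℕ, (N : ℤ) = n := ⟨n.toNat, Int.toNat_of_nonneg hn0.le⟩
      have hN4 : 4 ∣ N := by
        rw [← hN] at h4n; exact_mod_cast h4n
      have hN1 : 1 ≤ N := by omega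
      have haN : a = N + ξ - 1 := by omega
      rw [haN]
      exact_mod_cast Int.natCast_dvd_natCast.mpr (lemC N ξ hN4 hodd)
  · have hnneg : n < 0 := by omega
    obtain ⟨m, hm⟩ : ∃ m : ℕ, (m : ℤ) = -n := ⟨(-n).toNat, Int.toNat_of_nonneg (by omega)⟩
    have hm4 : 4 ∣ m := by
      have : (4 : ℤ) ∣ (m : ℤ) := by rw [hm]; exact dvd_neg.mpr h4n
      exact_mod_cast this
    have he : n + ξ - 1 = -(m : ℤ) + ξ - 1 := by rw [hm]; ring
    rw [he, ring_choose_reflect]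
    exact Dvd.dvd.mul_left
      (Int.natCast_dvd_natCast.mpr (four_dvd_nat_choose m ξ hm4 hodd)) _
end

section
/- Let χ be an integer, i a positive integer, and ξ a nonnegative even integer. Then C(2iχ − 1 + ξ, ξ) ≡ (−1)^{ξ/2} · C(iχ − 1 + ξ/2, ξ/2) modulo 4. -/
/-- Two-step Pascal identity for the generalized binomial coefficient over `ℤ`. -/
lemma ring_choose_step2 (M : ℤ) (j : ℕ) :
    Ring.choose (M + 2) (j + 2) =
      Ring.choose M j + 2 * Ring.choose M (j + 1) + Ring.choose M (j + 2) := by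
  rw [show (M + 2 : ℤ) = (M + 1) + 1 by ring]
  rw [Ring.choose_succ_succ (M + 1) (j + 1), Ring.choose_succ_succ M j,
    Ring.choose_succ_succ M (j + 1)]
  ring

/-- A function on `ℤ` whose consecutive values are congruent is congruent to its value at 0. -/
lemma modeq_const_of_step {n : ℤ} (e : ℤ → ℤ) (h : ∀ M : ℤ, e (M + 1) ≡ e M [ZMOD n]) :
    ∀ M : ℤ, e M ≡ e 0 [ZMOD n] := by
  intro M
  induction M using Int.induction_on with
  | zero => rfl
  | succ k ih => exact (h k).trans ih
  | pred k ih =>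
    have h' := h (-(k : ℤ) - 1)
    rw [show (-(k : ℤ) - 1 + 1) = -(k : ℤ) by ring] at h'
    exact h'.symm.trans ih

lemma ring_choose_odd_mod_two :
    ∀ (t : ℕ) (M : ℤ), Ring.choose (2 * M + 1) (2 * t + 1) ≡ Ring.choose M t [ZMOD 2] := by
  intro t
  induction t with
  | zero =>
    intro M
    simp only [Nat.mul_zero, Nat.zero_add, Ring.choose_one_right, Ring.choose_zero_right]
    exact Int.ModEq.symm (Int.modEq_iff_dvd.mpr ⟨M, by ring⟩)
  | succ t ih =>
    intro M
    set e : ℤ → ℤ := fun M => Ring.choose (2 * M + 1) (2 * t + 3) - Ring.choose M (t + 1) with he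
    have hstep : ∀ M : ℤ, e (M + 1) ≡ e M [ZMOD 2] := by
      intro M
      have key : e (M + 1) - e M =
          (Ring.choose (2 * M + 1) (2 * t + 1) - Ring.choose M t) +
            2 * Ring.choose (2 * M + 1) (2 * t + 2) := by
        simp only [he]
        have h1 : Ring.choose (2 * (M + 1) + 1) (2 * t + 3) =
            Ring.choose (2 * M + 1) (2 * t + 1) + 2 * Ring.choose (2 * M + 1) (2 * t + 2) +
              Ring.choose (2 * M + 1) (2 * t + 3) := by
          have := ring_choose_step2 (2 * M + 1) (2 * t + 1)
          rw [show (2 * M + 1 + 2 : ℤ) = 2 * (M + 1) + 1 by ring] at this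
          exact this
        have h2 : Ring.choose (M + 1) (t + 1) = Ring.choose M t + Ring.choose M (t + 1) :=
          Ring.choose_succ_succ M t
        rw [h1, h2]; ring
      have hd : (2 : ℤ) ∣ e (M + 1) - e M := by
        rw [key]
        exact dvd_add ((Int.modEq_iff_dvd.mp (ih M).symm)) ⟨_, rfl⟩
      exact Int.modEq_iff_dvd.mpr (by simpa using (dvd_neg.mpr hd))
    have h0 : e 0 = 0 := by
      simp only [he]
      rw [show (2 * (0 : ℤ) + 1) = ((1 : ℕ) : ℤ) by norm_num,
        show ((0 : ℤ)) = ((0 : ℕ) : ℤ) by norm_num,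
        Ring.choose_natCast, Ring.choose_natCast]
      simp [Nat.choose_eq_zero_of_lt]
    have := (modeq_const_of_step e hstep) M
    rw [h0] at this
    have : e M ≡ 0 [ZMOD 2] := this
    have : Ring.choose (2 * M + 1) (2 * t + 3) ≡ Ring.choose M (t + 1) [ZMOD 2] := by
      have hd := Int.modEq_iff_dvd.mp this
      simp only [he] at hd
      exact Int.modEq_iff_dvd.mpr (by simpa using hd)
    rw [show 2 * (t + 1) + 1 = 2 * t + 3 by omega]
    exact this

lemma ring_choose_even_mod_four :
    ∀ (t : ℕ) (M : ℤ),
      Ring.choose (2 * M + 1) (2 * t) ≡ (-1) ^ t * Ring.choose M t [ZMOD 4] := by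
  intro t
  induction t with
  | zero =>
    intro M
    simp [Ring.choose_zero_right]
  | succ t ih =>
    intro M
    set e : ℤ → ℤ := fun M =>
      Ring.choose (2 * M + 1) (2 * t + 2) - (-1) ^ (t + 1) * Ring.choose M (t + 1) with he
    have hstep : ∀ M : ℤ, e (M + 1) ≡ e M [ZMOD 4] := by
      intro M
      have key : e (M + 1) - e M =
          (Ring.choose (2 * M + 1) (2 * t) - (-1) ^ t * Ring.choose M t) +
            2 * ((-1) ^ t * Ring.choose M t + Ring.choose (2 * M + 1) (2 * t + 1)) := by
        simp only [he]
        have h1 : Ring.choose (2 * (M + 1) + 1) (2 * t + 2) =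
            Ring.choose (2 * M + 1) (2 * t) + 2 * Ring.choose (2 * M + 1) (2 * t + 1) +
              Ring.choose (2 * M + 1) (2 * t + 2) := by
          have := ring_choose_step2 (2 * M + 1) (2 * t)
          rw [show (2 * M + 1 + 2 : ℤ) = 2 * (M + 1) + 1 by ring] at this
          exact this
        have h2 : Ring.choose (M + 1) (t + 1) = Ring.choose M t + Ring.choose M (t + 1) :=
          Ring.choose_succ_succ M t
        rw [h1, h2]; ring
      have hd : (4 : ℤ) ∣ e (M + 1) - e M := by
        rw [key]
        refine dvd_add (Int.modEq_iff_dvd.mp (ih M).symm) ?_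
        have hmod2 : (2 : ℤ) ∣ (-1) ^ t * Ring.choose M t + Ring.choose (2 * M + 1) (2 * t + 1) := by
          have hL := Int.modEq_iff_dvd.mp (ring_choose_odd_mod_two t M).symm
          -- hL : 2 ∣ choose (2M+1)(2t+1) - choose M t
          have hsign : (2 : ℤ) ∣ (-1) ^ t * Ring.choose M t + Ring.choose M t := by
            rcases Nat.even_or_odd t with h | h
            · rw [h.neg_one_pow]; exact ⟨Ring.choose M t, by ring⟩
            · rw [h.neg_one_pow]; exact ⟨0, by ring⟩
          have := dvd_add hsign hL
          have heq : (-1) ^ t * Ring.choose M t + Ring.choose M t +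
              (Ring.choose (2 * M + 1) (2 * t + 1) - Ring.choose M t) =
              (-1) ^ t * Ring.choose M t + Ring.choose (2 * M + 1) (2 * t + 1) := by ring
          rwa [heq] at this
        obtain ⟨c, hc⟩ := hmod2
        exact ⟨c, by rw [hc]; ring⟩
      exact Int.modEq_iff_dvd.mpr (by simpa using (dvd_neg.mpr hd))
    have h0 : e 0 = 0 := by
      simp only [he]
      rw [show (2 * (0 : ℤ) + 1) = ((1 : ℕ) : ℤ) by norm_num,
        show ((0 : ℤ)) = ((0 : ℕ) : ℤ) by norm_num,
        Ring.choose_natCast, Ring.choose_natCast]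
      simp [Nat.choose_eq_zero_of_lt]
    have hM := (modeq_const_of_step e hstep) M
    rw [h0] at hM
    have hd := Int.modEq_iff_dvd.mp hM
    simp only [he] at hd
    have : Ring.choose (2 * M + 1) (2 * t + 2) ≡ (-1) ^ (t + 1) * Ring.choose M (t + 1) [ZMOD 4] :=
      Int.modEq_iff_dvd.mpr (by simpa using hd)
    rw [show 2 * (t + 1) = 2 * t + 2 by omega]
    exact this

/-- For `χ ∈ ℤ`, `i ≥ 1` and `ξ` a nonnegative even integer,
`C(2iχ - 1 + ξ, ξ) ≡ (-1)^{ξ/2} C(iχ - 1 + ξ/2, ξ/2)` modulo `4`, where `C` is the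
generalized binomial coefficient. -/
theorem choose_even_mod_four (χ : ℤ) (i ξ : ℕ) (hi : 0 < i) (heven : 2 ∣ ξ) :
    Ring.choose (2 * (i : ℤ) * χ - 1 + (ξ : ℤ)) ξ ≡
      (-1) ^ (ξ / 2) * Ring.choose ((i : ℤ) * χ - 1 + ((ξ / 2 : ℕ) : ℤ)) (ξ / 2) [ZMOD 4] := by
  obtain ⟨t, rfl⟩ := heven
  have ht2 : 2 * t / 2 = t := by omega
  have := ring_choose_even_mod_four t ((i : ℤ) * χ + (t : ℤ) - 1)
  rw [show (2 * ((i : ℤ) * χ + (t : ℤ) - 1) + 1) = 2 * (i : ℤ) * χ - 1 + ((2 * t : ℕ) : ℤ) by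
      push_cast; ring] at this
  rw [ht2]
  rw [show ((i : ℤ) * χ + (t : ℤ) - 1) = (i : ℤ) * χ - 1 + (t : ℤ) by ring] at this
  exact this
end

section
/- Let χ be an integer, i a positive integer, and ξ a positive integer with ξ ≡ 1 or 2 modulo 3. Then the generalized binomial coefficient C(3iχ − 1 + ξ, ξ) is divisible by 3. -/
/-- If the last base-3 digit of `m` is smaller than that of `ξ`, then `3 ∣ C(m, ξ)`. -/
lemma three_dvd_nat_choose_aux (m ξ : ℕ) (h : m % 3 < ξ % 3) :
    (3 : ℤ) ∣ (m.choose ξ : ℤ) := by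
  have : Fact (Nat.Prime 3) := ⟨by norm_num⟩
  have key := Choose.choose_modEq_choose_mod_mul_choose_div (p := 3) (n := m) (k := ξ)
  rw [Nat.choose_eq_zero_of_lt h] at key
  exact Int.modEq_zero_iff_dvd.mp (by simpa using key)

/-- `Ring.choose` on `ℤ` at a nonnegative argument. -/
lemma ring_choose_int_nonneg (n : ℤ) (hn : 0 ≤ n) (k : ℕ) :
    Ring.choose n k = (n.toNat.choose k : ℤ) := by
  have := Ring.choose_natCast (R := ℤ) n.toNat k
  rwa [Int.toNat_of_nonneg hn] at this

/-- Evaluating the descending Pochhammer polynomial at a natural number. -/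
lemma descPochhammer_eval_natCast_eq (m k : ℕ) :
    (descPochhammer ℤ k).eval (m : ℤ) = (k.factorial : ℤ) * (m.choose k : ℤ) := by
  rw [descPochhammer_eval_eq_descFactorial, Nat.descFactorial_eq_factorial_mul_choose]
  push_cast
  ring

/-- `Ring.choose` on `ℤ` at a negative argument: reflection formula. -/
lemma ring_choose_int_neg (n : ℤ) (k : ℕ) :
    Ring.choose n k = (-1) ^ k * (((k : ℤ) - 1 - n).toNat.choose k : ℤ) ∨ 0 ≤ n := by
  by_cases hn : 0 ≤ n
  · exact Or.inr hn
  push_neg at hn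
  left
  have hfac : (k.factorial : ℤ) ≠ 0 := by exact_mod_cast k.factorial_ne_zero
  apply mul_left_cancel₀ hfac
  have h1 : (descPochhammer ℤ k).smeval n = (k.factorial : ℤ) • Ring.choose n k :=
    Ring.descPochhammer_eq_factorial_smul_choose n k
  have h1' : (descPochhammer ℤ k).eval n = (k.factorial : ℤ) * Ring.choose n k := by
    rw [Polynomial.eval_eq_smeval, h1, smul_eq_mul]
  have hm : (0 : ℤ) ≤ (k : ℤ) - 1 - n := by omega
  have hmv : (((k : ℤ) - 1 - n).toNat : ℤ) = (k : ℤ) - 1 - n := Int.toNat_of_nonneg hm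
  have h2 : (descPochhammer ℤ k).eval n
      = (-1) ^ k * (descPochhammer ℤ k).eval ((k : ℤ) - 1 - n) := by
    rw [descPochhammer_eval_eq_ascPochhammer ℤ n k,
      show n - (k : ℤ) + 1 = -((k : ℤ) - 1 - n) by ring,
      ascPochhammer_eval_neg_eq_descPochhammer]
  have h3 : (descPochhammer ℤ k).eval ((k : ℤ) - 1 - n)
      = (k.factorial : ℤ) * ((((k : ℤ) - 1 - n).toNat).choose k : ℤ) := by
    rw [← hmv]
    exact descPochhammer_eval_natCast_eq _ k
  rw [← h1', h2, h3]
  ring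

/-- For `χ ∈ ℤ`, `i ≥ 1` and `ξ` a positive integer with `ξ ≡ 1` or `2 (mod 3)`, the
generalized binomial coefficient `C(3iχ - 1 + ξ, ξ)` is divisible by `3`. -/
theorem three_dvd_choose (χ : ℤ) (i ξ : ℕ) (hi : 0 < i) (hξ : 0 < ξ)
    (hmod : ξ % 3 = 1 ∨ ξ % 3 = 2) :
    3 ∣ Ring.choose (3 * (i : ℤ) * χ - 1 + (ξ : ℤ)) ξ := by
  set n : ℤ := 3 * (i : ℤ) * χ - 1 + (ξ : ℤ) with hn
  rcases ring_choose_int_neg n ξ with h | hpos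
  · rw [h]
    have h3 : (3 : ℤ) ∣ ((ξ : ℤ) - 1 - n) := ⟨-(i * χ), by rw [hn]; ring⟩
    have hm : ((ξ : ℤ) - 1 - n).toNat % 3 < ξ % 3 := by omega
    exact Dvd.dvd.mul_left (three_dvd_nat_choose_aux _ ξ hm) _
  · rw [ring_choose_int_nonneg n hpos ξ]
    apply three_dvd_nat_choose_aux
    have hnt : (n.toNat : ℤ) = n := Int.toNat_of_nonneg hpos
    have h3 : (3 : ℤ) ∣ (n - ((ξ : ℤ) - 1)) := ⟨i * χ, by rw [hn]; ring⟩
    omega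
end

section
/- Let χ be an integer, i a positive integer divisible by 3, and ξ a positive integer with ξ ≡ 1 or 2 modulo 3. Then the generalized binomial coefficient C(3iχ − 1 + ξ, ξ) is divisible by 9. -/
/-- For `χ ∈ ℤ`, `i` a positive integer divisible by `3` and `ξ` a positive integer with
`ξ ≡ 1` or `2 (mod 3)`, the generalized binomial coefficient `C(3iχ - 1 + ξ, ξ)` is
divisible by `9`. -/
theorem nine_dvd_choose (χ : ℤ) (i ξ : ℕ) (hi : 0 < i) (hi3 : 3 ∣ i) (hξ : 0 < ξ)
    (hmod : ξ % 3 = 1 ∨ ξ % 3 = 2) :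
    9 ∣ Ring.choose (3 * (i : ℤ) * χ - 1 + (ξ : ℤ)) ξ := by
  obtain ⟨m, rfl⟩ := hi3
  obtain ⟨k, rfl⟩ : ∃ k, ξ = k + 1 := ⟨ξ - 1, (Nat.succ_pred_eq_of_pos hξ).symm⟩
  set r : ℤ := 3 * ((3 * m : ℕ) : ℤ) * χ - 1 + ((k + 1 : ℕ) : ℤ) with hr
  have key := Ring.choose_smul_choose r (n := k + 1) (k := k) (Nat.le_succ k)
  rw [Nat.choose_succ_self_right, Nat.add_sub_cancel_left, Ring.choose_one_right] at key
  have hsub : r - (k : ℤ) = 9 * (m * χ) := by push_cast [hr]; ring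
  have h9 : (9 : ℤ) ∣ ((k + 1 : ℕ) : ℤ) * Ring.choose r (k + 1) := by
    rw [← nsmul_eq_mul, key, hsub]
    exact ⟨Ring.choose r k * (m * χ), by ring⟩
  have hcop : IsCoprime (9 : ℤ) ((k + 1 : ℕ) : ℤ) := by
    have h3 : Nat.Coprime 3 (k + 1) :=
      (Nat.prime_three.coprime_iff_not_dvd).mpr (by omega)
    have h9 : Nat.Coprime 9 (k + 1) := by
      have := Nat.Coprime.pow_left 2 h3
      norm_num at this
      exact this
    exact_mod_cast Nat.isCoprime_iff_coprime.mpr h9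
  exact hcop.dvd_of_dvd_mul_left h9
end

section
/- Let χ be an integer, i a positive integer, and ξ a nonnegative integer divisible by 3. Then (−1)^{ξ} · C(3iχ − 1 + ξ, ξ) ≡ (−1)^{ξ/3} · C(iχ − 1 + ξ/3, ξ/3) modulo 9. -/
lemma aux_nine_dvd_choose {k j T : ℕ} (hj1 : 1 ≤ j) (hjk : j ≤ k)
    (hT : 9 * k.factorial ∣ T) : 9 ∣ T.choose j := by
  rcases Nat.eq_zero_or_pos T with hT0 | hT0
  · subst hT0
    rw [Nat.choose_eq_zero_of_lt (by omega)]
    exact dvd_zero 9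
  have hjfac : j ∣ k.factorial := Nat.dvd_factorial hj1 hjk
  have h9j : 9 * j ∣ T := dvd_trans (mul_dvd_mul_left 9 hjfac) hT
  have key : T * (T-1).choose (j-1) = T.choose j * j := by
    have := Nat.add_one_mul_choose_eq (T-1) (j-1)
    have h1 : T - 1 + 1 = T := by omega
    have h2 : j - 1 + 1 = j := by omega
    simpa [h1, h2] using this
  have : 9 * j ∣ T.choose j * j := key ▸ Dvd.dvd.mul_right h9j _
  rw [mul_comm 9 j, mul_comm (T.choose j) j] at this
  exact (mul_dvd_mul_iff_left (by omega : j ≠ 0)).mp this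

open Finset in
lemma aux_periodic (k : ℕ) (x : ℤ) {T : ℕ} (hT : 9 * k.factorial ∣ T) :
    Ring.choose (x + (T : ℤ)) k ≡ Ring.choose x k [ZMOD 9] := by
  rw [Ring.add_choose_eq k (Commute.all _ _)]
  have hsum : ∑ ij ∈ antidiagonal k, (if ij = (k, 0) then Ring.choose x k else 0) =
      Ring.choose x k := by
    rw [Finset.sum_ite_eq' (antidiagonal k) (k, 0) (fun _ => Ring.choose x k)]
    simp
  refine Int.ModEq.symm (Int.modEq_iff_dvd.mpr ?_)
  rw [← hsum, ← Finset.sum_sub_distrib]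
  refine Finset.dvd_sum ?_
  intro ij hij
  rcases eq_or_ne ij (k, 0) with h | h
  · subst h
    simp [Ring.choose_natCast, Ring.choose_zero_right]
  · rw [if_neg h]
    have hmem := Finset.HasAntidiagonal.mem_antidiagonal.mp hij
    have hj1 : 1 ≤ ij.2 := by
      rcases Nat.eq_zero_or_pos ij.2 with h0 | h0
      · exfalso; apply h
        have : ij.1 = k := by omega
        exact Prod.ext this h0
      · exact h0
    have hjk : ij.2 ≤ k := by omega
    have h9 : (9 : ℤ) ∣ Ring.choose (T : ℤ) ij.2 := by
      rw [Ring.choose_natCast]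
      exact_mod_cast Int.natCast_dvd_natCast.mpr (aux_nine_dvd_choose hj1 hjk hT)
    rw [sub_zero]
    exact Dvd.dvd.mul_left h9 _

open Polynomial in
lemma aux_poly_id (n : ℕ) :
    ((1 : (ZMod 9)[X]) + X)^(3*(n+1)) =
      (1 + X^3)^(n+1) + 3 * ((n:(ZMod 9)[X]) + 1) * ((1 + X^3)^n * (X + X^2)) := by
  have h90 : (9 : (ZMod 9)[X]) = 0 := by
    have h : ((9:ℕ) : ZMod 9) = 0 := by decide
    rw [show (9 : (ZMod 9)[X]) = ((9:ℕ) : (ZMod 9)[X]) from by norm_num,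
      ← Polynomial.C_eq_natCast, h, map_zero]
  have h9 : (3 : (ZMod 9)[X]) * 3 = 0 := by
    rw [show (3:(ZMod 9)[X])*3 = 9 from by norm_num, h90]
  induction n with
  | zero => ring_nf
  | succ m ih =>
    have step : ((1 : (ZMod 9)[X]) + X)^(3*(m+1+1)) = ((1:(ZMod 9)[X])+X)^(3*(m+1)) * (1+X)^3 := by
      rw [← pow_add]; ring_nf
    have h3 : ((1 : (ZMod 9)[X]) + X)^3 = (1 + X^3) + 3 * (X + X^2) := by ring
    rw [step, ih, h3]
    push_cast
    linear_combination (((m:(ZMod 9)[X])+1) * ((1+X^3)^m*(X+X^2)^2)) * h9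

open Polynomial in
lemma aux_nat_case (N B : ℕ) :
    (((3*N).choose (3*B) : ℕ) : ZMod 9) = ((N.choose B : ℕ) : ZMod 9) := by
  cases N with
  | zero =>
    cases B with
    | zero => simp
    | succ b => simp [Nat.choose_eq_zero_of_lt]
  | succ n =>
    have hexp : ∀ m : ℕ, ((1:(ZMod 9)[X]) + X^3)^m = expand (ZMod 9) 3 ((1+X)^m) := by
      intro m; rw [map_pow, map_add, map_one, expand_X]
    have hq : (((1:(ZMod 9)[X]) + X^3)^n * (X + X^2)).coeff (3*B) = 0 := by
      have hsplit : ((1:(ZMod 9)[X]) + X^3)^n * (X + X^2) =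
          (1 + X^3)^n * X^1 + (1 + X^3)^n * X^2 := by ring
      rw [hsplit, coeff_add, coeff_mul_X_pow', coeff_mul_X_pow']
      rcases Nat.eq_zero_or_pos B with hB | hB
      · subst hB; norm_num
      · rw [if_pos (by omega), if_pos (by omega), hexp,
          coeff_expand (by norm_num), coeff_expand (by norm_num),
          if_neg (by omega), if_neg (by omega), add_zero]
    have hmain := congrArg (fun p : (ZMod 9)[X] => p.coeff (3*B)) (aux_poly_id n)
    simp only [coeff_one_add_X_pow] at hmain
    rw [hmain]
    have hC3 : (C (3:ZMod 9) : (ZMod 9)[X]) = 3 := by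
      rw [show (3:ZMod 9) = ((3:ℕ):ZMod 9) by norm_num, C_eq_natCast]; norm_num
    have hconst : (3 * ((n:(ZMod 9)[X]) + 1)) = C (3 * ((n:ZMod 9) + 1)) := by
      rw [map_mul, map_add, map_one, hC3, C_eq_natCast]
    rw [coeff_add, hexp (n+1), coeff_expand (by norm_num), if_pos ⟨B, rfl⟩,
      Nat.mul_div_cancel_left B (by norm_num), coeff_one_add_X_pow, hconst,
      coeff_C_mul, hq, mul_zero, add_zero]

lemma aux_int_case (x : ℤ) (b : ℕ) :
    Ring.choose (3*x) (3*b) ≡ Ring.choose x b [ZMOD 9] := by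
  set T : ℕ := 9 * (3*b).factorial * (x.natAbs + 1) with hTdef
  have hTbig : (x.natAbs : ℤ) < (T : ℤ) := by
    have : x.natAbs + 1 ≤ T := by
      have h1 : 1 ≤ 9 * (3*b).factorial := Nat.one_le_iff_ne_zero.mpr (by positivity)
      calc x.natAbs + 1 = 1 * (x.natAbs + 1) := (one_mul _).symm
      _ ≤ 9 * (3*b).factorial * (x.natAbs + 1) := Nat.mul_le_mul_right _ h1
    omega
  obtain ⟨N, hN⟩ : ∃ N : ℕ, (N : ℤ) = x + (T : ℤ) := by
    refine ⟨(x + (T:ℤ)).toNat, Int.toNat_of_nonneg ?_⟩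
    have h2 : -(x.natAbs : ℤ) ≤ x := by
      rcases Int.natAbs_eq x with h | h <;> omega
    omega
  have hd1 : 9 * b.factorial ∣ T := by
    refine Dvd.dvd.mul_right ?_ _
    exact mul_dvd_mul_left 9 (Nat.factorial_dvd_factorial (by omega))
  have hd2 : 9 * (3*b).factorial ∣ 3 * T := Dvd.dvd.mul_left (Dvd.dvd.mul_right dvd_rfl _) 3
  have h1 : Ring.choose (x + (T:ℤ)) b ≡ Ring.choose x b [ZMOD 9] := aux_periodic b x hd1
  have h2 : Ring.choose (3*x + ((3*T : ℕ) : ℤ)) (3*b) ≡ Ring.choose (3*x) (3*b) [ZMOD 9] :=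
    aux_periodic (3*b) (3*x) hd2
  have hx3 : 3*x + ((3*T : ℕ) : ℤ) = ((3*N : ℕ) : ℤ) := by push_cast; omega
  rw [hx3] at h2
  have hcast1 : Ring.choose ((3*N : ℕ) : ℤ) (3*b) = (((3*N).choose (3*b) : ℕ) : ℤ) :=
    Ring.choose_natCast (3*N) (3*b)
  have hcast2 : Ring.choose ((N : ℕ) : ℤ) b = ((N.choose b : ℕ) : ℤ) :=
    Ring.choose_natCast N b
  have hmid : (((3*N).choose (3*b) : ℕ) : ℤ) ≡ ((N.choose b : ℕ) : ℤ) [ZMOD 9] :=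
    Int.natCast_modEq_iff.mpr ((ZMod.natCast_eq_natCast_iff _ _ _).mp (aux_nat_case N b))
  have hNx : (N : ℤ) = x + (T : ℤ) := hN
  calc Ring.choose (3*x) (3*b)
      ≡ Ring.choose ((3*N : ℕ) : ℤ) (3*b) [ZMOD 9] := h2.symm
    _ = (((3*N).choose (3*b) : ℕ) : ℤ) := hcast1
    _ ≡ ((N.choose b : ℕ) : ℤ) [ZMOD 9] := hmid
    _ = Ring.choose ((N : ℕ) : ℤ) b := hcast2.symm
    _ = Ring.choose (x + (T:ℤ)) b := by rw [hNx]
    _ ≡ Ring.choose x b [ZMOD 9] := h1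

open Polynomial in
lemma aux_choose_neg (a : ℤ) (k : ℕ) :
    (-1)^k * Ring.choose (a - 1 + k) k = Ring.choose (-a) k := by
  refine nsmul_right_injective (Nat.factorial_ne_zero k) ?_
  simp only
  rw [← Ring.descPochhammer_eq_factorial_smul_choose, nsmul_eq_mul, mul_left_comm,
    ← nsmul_eq_mul, ← Ring.descPochhammer_eq_factorial_smul_choose]
  have e1 : (descPochhammer ℤ k).smeval (-a) = (descPochhammer ℤ k).eval (-a) :=
    (Polynomial.eval_eq_smeval _ _).symm
  have e2 : (descPochhammer ℤ k).smeval (a - 1 + ↑k) = (descPochhammer ℤ k).eval (a - 1 + ↑k) :=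
    (Polynomial.eval_eq_smeval _ _).symm
  rw [e1, e2,
    show eval (-a) (descPochhammer ℤ k) = eval (-a - k + 1) (ascPochhammer ℤ k) from
      descPochhammer_eval_eq_ascPochhammer ℤ (-a) k,
    show -a - (k:ℤ) + 1 = -(a - 1 + k) by ring,
    ascPochhammer_eval_neg_eq_descPochhammer]

/-- For `χ ∈ ℤ`, `i ≥ 1` and `ξ` a nonnegative integer divisible by `3`,
`(-1)^ξ C(3iχ - 1 + ξ, ξ) ≡ (-1)^{ξ/3} C(iχ - 1 + ξ/3, ξ/3)` modulo `9`, where `C` is the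
generalized binomial coefficient. -/
theorem choose_mul_three_mod_nine (χ : ℤ) (i ξ : ℕ) (hi : 0 < i) (h3 : 3 ∣ ξ) :
    (-1) ^ ξ * Ring.choose (3 * (i : ℤ) * χ - 1 + (ξ : ℤ)) ξ ≡
      (-1) ^ (ξ / 3) * Ring.choose ((i : ℤ) * χ - 1 + ((ξ / 3 : ℕ) : ℤ)) (ξ / 3) [ZMOD 9] := by
  obtain ⟨b, rfl⟩ := h3
  have hdiv : 3 * b / 3 = b := Nat.mul_div_cancel_left b (by norm_num)
  rw [hdiv]
  have hL : (-1:ℤ) ^ (3*b) * Ring.choose (3 * (i : ℤ) * χ - 1 + ((3*b : ℕ) : ℤ)) (3*b) =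
      Ring.choose (3 * (-((i:ℤ) * χ))) (3*b) := by
    rw [show (3 : ℤ) * (-((i:ℤ) * χ)) = -(3 * (i:ℤ) * χ) by ring]
    exact_mod_cast aux_choose_neg (3 * (i:ℤ) * χ) (3*b)
  have hR : (-1:ℤ) ^ b * Ring.choose ((i : ℤ) * χ - 1 + ((b : ℕ) : ℤ)) b =
      Ring.choose (-((i:ℤ) * χ)) b := aux_choose_neg ((i:ℤ) * χ) b
  rw [hL, hR]
  exact aux_int_case (-((i:ℤ) * χ)) b
end

section
/- Let χ be an integer, a a positive even integer, and p a partition of a that has at least one odd part. Writing d_i = p_i − p_{i+1} for i ≥ 1, the finite product ∏_{i≥1} C(2iχ − 1 + d_i, d_i) is divisible by 4. -/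
open Finset

/-- The parts of a partition `p` of `a`, viewed as a weakly decreasing sequence
`p_1 ≥ p_2 ≥ ⋯` padded with zeros; `partSeq p i` is the part `p_{i+1}` (0-indexed). -/
def partSeq {a : ℕ} (p : Nat.Partition a) (i : ℕ) : ℕ :=
  (p.parts.sort (· ≥ ·)).getD i 0


lemma coprime_four_of_odd {d : ℕ} (hd : Odd d) : Nat.Coprime 4 d := by
  have h2 : Nat.Coprime 2 d := (Nat.prime_two.coprime_iff_not_dvd).mpr (by
    obtain ⟨k, rfl⟩ := hd; omega)
  have h4 : (4 : ℕ) = 2 ^ 2 := rfl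
  rw [h4]
  exact h2.pow_left _

lemma choose_succ_key (m e : ℕ) : (m + 1) * m.choose e = (m + 1).choose (e + 1) * (e + 1) := by
  simpa [Nat.succ_eq_add_one] using Nat.add_one_mul_choose_eq m e

/-- `C(even, odd)` is even. -/
lemma two_dvd_choose {n d : ℕ} (hn : Even n) (hd : Odd d) : 2 ∣ n.choose d := by
  obtain ⟨e, rfl⟩ : ∃ e, d = e + 1 := ⟨d - 1, by obtain ⟨k, rfl⟩ := hd; omega⟩
  match n with
  | 0 => simp [Nat.choose_eq_zero_of_lt]
  | m + 1 =>
    have h2 : 2 ∣ (m + 1) * m.choose e := (hn.two_dvd).mul_right _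
    rw [choose_succ_key] at h2
    exact (Nat.prime_two.coprime_iff_not_dvd.mpr (by
        obtain ⟨k, hk⟩ := hd; omega)).dvd_of_dvd_mul_right h2

lemma four_dvd_choose_mod4_zero {n d : ℕ} (hn : n % 4 = 0) (hd : Odd d) : 4 ∣ n.choose d := by
  obtain ⟨e, rfl⟩ : ∃ e, d = e + 1 := ⟨d - 1, by obtain ⟨k, rfl⟩ := hd; omega⟩
  match n with
  | 0 => simp [Nat.choose_eq_zero_of_lt]
  | m + 1 =>
    have h2 : 4 ∣ (m + 1) * m.choose e := Dvd.dvd.mul_right (by omega) _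
    rw [choose_succ_key] at h2
    exact (coprime_four_of_odd hd).dvd_of_dvd_mul_right h2

lemma two_dvd_choose_mod4 {m e : ℕ} (hm : m % 4 = 1) (he : e % 4 = 2) : 2 ∣ m.choose e := by
  haveI : Fact (Nat.Prime 2) := ⟨Nat.prime_two⟩
  have hL := Choose.choose_modEq_choose_mod_mul_choose_div_nat (p := 2) (n := m) (k := e)
  have h1 : m % 2 = 1 := by omega
  have h2 : e % 2 = 0 := by omega
  rw [h1, h2] at hL
  simp only [Nat.choose_self, Nat.choose_zero_right, one_mul] at hL
  have hdvd : 2 ∣ (m / 2).choose (e / 2) :=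
    two_dvd_choose (Nat.even_iff.mpr (by omega)) (Nat.odd_iff.mpr (by omega))
  have := (Nat.modEq_zero_iff_dvd).mpr hdvd
  exact (Nat.modEq_zero_iff_dvd).mp (hL.trans this)

lemma four_dvd_choose_mod4_two {n d : ℕ} (hn : n % 4 = 2) (hd : d % 4 = 3) : 4 ∣ n.choose d := by
  obtain ⟨e, rfl⟩ : ∃ e, d = e + 1 := ⟨d - 1, by omega⟩
  obtain ⟨m, rfl⟩ : ∃ m, n = m + 1 := ⟨n - 1, by omega⟩
  obtain ⟨t, ht⟩ := two_dvd_choose_mod4 (m := m) (e := e) (by omega) (by omega)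
  have h2 : 4 ∣ (m + 1) * m.choose e := by
    obtain ⟨w, hw⟩ : 2 ∣ m + 1 := by omega
    exact ⟨w * t, by rw [hw, ht]; ring⟩
  rw [choose_succ_key] at h2
  exact (coprime_four_of_odd (Nat.odd_iff.mpr (by omega))).dvd_of_dvd_mul_right h2

open Polynomial in
lemma ringChoose_neg (m d : ℕ) (hm : 0 < m) :
    Ring.choose (-(m : ℤ)) d = (-1) ^ d * ((m + d - 1).choose d : ℤ) := by
  have key := Ring.descPochhammer_eq_factorial_smul_choose (R := ℤ) (-(m : ℤ)) d
  rw [← eval_eq_smeval, descPochhammer_eval_eq_ascPochhammer] at key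
  have h1 : -(m : ℤ) - d + 1 = -((m + d - 1 : ℕ) : ℤ) := by push_cast [hm]; omega
  rw [h1, ascPochhammer_eval_neg_eq_descPochhammer,
    descPochhammer_eval_eq_descFactorial ℤ (m + d - 1) d,
    Nat.descFactorial_eq_factorial_mul_choose, nsmul_eq_mul] at key
  have hne : ((d.factorial : ℤ)) ≠ 0 := by exact_mod_cast d.factorial_ne_zero
  apply mul_left_cancel₀ hne
  rw [← key]; push_cast; ring

lemma int_two_dvd_ringChoose (m : ℤ) {d : ℕ} (hd : Odd d) :
    2 ∣ Ring.choose (2 * m - 1 + (d : ℤ)) d := by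
  obtain ⟨k, rfl⟩ := hd
  set x : ℤ := 2 * m - 1 + ((2 * k + 1 : ℕ) : ℤ) with hx
  rcases le_or_gt 0 x with h | h
  · rw [show x = ((x.toNat : ℕ) : ℤ) from (Int.toNat_of_nonneg h).symm, Ring.choose_natCast]
    have : (2 : ℤ) ∣ (x.toNat.choose (2 * k + 1) : ℤ) := by
      exact_mod_cast Int.natCast_dvd_natCast.mpr
        (two_dvd_choose (Nat.even_iff.mpr (by omega)) (Nat.odd_iff.mpr (by omega)))
    exact this
  · set n : ℕ := (-x).toNat with hn
    have hxn : x = -((n : ℕ) : ℤ) := by simp [hn, Int.toNat_of_nonneg (by omega : (0:ℤ) ≤ -x)]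
    rw [hxn, ringChoose_neg _ _ (by omega)]
    apply Dvd.dvd.mul_left
    exact_mod_cast Int.natCast_dvd_natCast.mpr
      (two_dvd_choose (Nat.even_iff.mpr (by omega)) (Nat.odd_iff.mpr (by omega)))

lemma int_four_dvd_ringChoose (u : ℤ) {d : ℕ} (hd : Odd d) :
    4 ∣ Ring.choose (4 * u - 1 + (d : ℤ)) d := by
  obtain ⟨k, rfl⟩ := hd
  set x : ℤ := 4 * u - 1 + ((2 * k + 1 : ℕ) : ℤ) with hx
  rcases le_or_gt 0 x with h | h
  · rw [show x = ((x.toNat : ℕ) : ℤ) from (Int.toNat_of_nonneg h).symm, Ring.choose_natCast]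
    have hnat : 4 ∣ x.toNat.choose (2 * k + 1) := by
      rcases Nat.even_or_odd k with hk | hk
      · obtain ⟨j, rfl⟩ := hk
        exact four_dvd_choose_mod4_zero (by omega) (Nat.odd_iff.mpr (by omega))
      · obtain ⟨j, rfl⟩ := hk
        exact four_dvd_choose_mod4_two (by omega) (by omega)
    exact_mod_cast Int.natCast_dvd_natCast.mpr hnat
  · set n : ℕ := (-x).toNat with hn
    have hxn : x = -((n : ℕ) : ℤ) := by simp [hn, Int.toNat_of_nonneg (by omega : (0:ℤ) ≤ -x)]
    rw [hxn, ringChoose_neg _ _ (by omega)]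
    apply Dvd.dvd.mul_left
    exact_mod_cast Int.natCast_dvd_natCast.mpr
      (four_dvd_choose_mod4_zero (by omega) (Nat.odd_iff.mpr (by omega)))

lemma sum_range_getD (l : List ℕ) : ∀ n, l.length ≤ n →
    ∑ i ∈ Finset.range n, l.getD i 0 = l.sum := by
  induction l with
  | nil => intro n _; simp
  | cons x l ih =>
    intro n hn
    simp only [List.length_cons] at hn
    obtain ⟨m, rfl⟩ : ∃ m, n = m + 1 := ⟨n - 1, by omega⟩
    rw [Finset.sum_range_succ']
    simp only [List.getD_cons_succ, List.getD_cons_zero, List.sum_cons]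
    rw [ih m (by omega)]
    ring

lemma partSeq_card_le {a : ℕ} (p : Nat.Partition a) : (p.parts.sort (· ≥ ·)).length ≤ a := by
  rw [Multiset.length_sort]
  have h1 : Multiset.card p.parts • 1 ≤ p.parts.sum :=
    Multiset.card_nsmul_le_sum (fun x hx => p.parts_pos hx)
  simpa [p.parts_sum] using h1

lemma partSeq_zero_of_le {a : ℕ} (p : Nat.Partition a) {i : ℕ} (h : a ≤ i) : partSeq p i = 0 :=
  List.getD_eq_default _ _ (le_trans (partSeq_card_le p) h)

lemma partSeq_anti {a : ℕ} (p : Nat.Partition a) {i j : ℕ} (h : i ≤ j) :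
    partSeq p j ≤ partSeq p i := by
  unfold partSeq
  rcases lt_or_ge j (p.parts.sort (· ≥ ·)).length with hj | hj
  · rcases eq_or_lt_of_le h with rfl | hij
    · exact le_refl _
    · have hs := Multiset.pairwise_sort (r := (· ≥ ·)) p.parts
      have hrel := List.Pairwise.rel_get_of_lt hs (a := ⟨i, lt_trans hij hj⟩) (b := ⟨j, hj⟩) hij
      rw [List.getD_eq_getElem _ _ (lt_trans hij hj), List.getD_eq_getElem _ _ hj]
      exact hrel
  · rw [List.getD_eq_default _ _ hj]; exact Nat.zero_le _

lemma partSeq_sum {a : ℕ} (p : Nat.Partition a) : ∑ i ∈ Finset.range a, partSeq p i = a := by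
  unfold partSeq
  rw [sum_range_getD _ a (partSeq_card_le p)]
  calc (p.parts.sort (· ≥ ·)).sum
      = ((p.parts.sort (· ≥ ·) : List ℕ) : Multiset ℕ).sum := (Multiset.sum_coe _).symm
    _ = a := by rw [Multiset.sort_eq]; exact p.parts_sum

lemma partSeq_mem {a : ℕ} (p : Nat.Partition a) {x : ℕ} (hx : x ∈ p.parts) :
    ∃ i, i < a ∧ partSeq p i = x := by
  rw [← Multiset.mem_sort (· ≥ ·)] at hx
  obtain ⟨i, hi, hget⟩ := List.getElem_of_mem hx
  exact ⟨i, lt_of_lt_of_le hi (partSeq_card_le p),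
    by rw [partSeq, List.getD_eq_getElem _ _ hi, hget]⟩

lemma partSeq_telescope {a : ℕ} (p : Nat.Partition a) {i : ℕ} (hia : i ≤ a) :
    partSeq p i = ∑ j ∈ Finset.Ico i a, (partSeq p j - partSeq p (j + 1)) := by
  have hZ : ((partSeq p i : ℕ) : ℤ) =
      ∑ j ∈ Finset.Ico i a, ((partSeq p j - partSeq p (j + 1) : ℕ) : ℤ) := by
    have hcast : ∀ j, ((partSeq p j - partSeq p (j + 1) : ℕ) : ℤ) =
        (partSeq p j : ℤ) - (partSeq p (j + 1) : ℤ) := fun j =>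
      Nat.cast_sub (partSeq_anti p (Nat.le_succ j))
    simp only [hcast]
    rw [Finset.sum_Ico_eq_sum_range]
    have := Finset.sum_range_sub' (fun k => ((partSeq p (i + k) : ℕ) : ℤ)) (a - i)
    simp only [← add_assoc] at this
    rw [this, Nat.add_zero, Nat.add_sub_cancel' hia, partSeq_zero_of_le p (le_refl a)]
    simp
  rw [← Nat.cast_sum] at hZ
  exact_mod_cast hZ

/-- Let `χ ∈ ℤ`, let `a` be a positive even integer, and let `p` be a partition of `a`
with at least one odd part.  With `d_i = p_i - p_{i+1}`, the product
`∏_{i ≥ 1} C(2iχ - 1 + d_i, d_i)` is divisible by `4`.  A partition of `a` has at most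
`a` parts, so `d_i = 0` and the factor equals `1` for `i > a`; hence the (finite) product
may be taken over `1 ≤ i ≤ a`. -/
theorem four_dvd_prod_choose (χ : ℤ) (a : ℕ) (ha : 0 < a) (ha2 : 2 ∣ a)
    (p : Nat.Partition a) (hodd : ∃ x ∈ p.parts, Odd x) :
    4 ∣ ∏ i ∈ Finset.range a,
        Ring.choose (2 * ((i : ℤ) + 1) * χ - 1 + ((partSeq p i - partSeq p (i + 1) : ℕ) : ℤ))
          (partSeq p i - partSeq p (i + 1)) := by
  classical
  set f : ℕ → ℤ := fun i =>
    Ring.choose (2 * ((i : ℤ) + 1) * χ - 1 + ((partSeq p i - partSeq p (i + 1) : ℕ) : ℤ))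
      (partSeq p i - partSeq p (i + 1)) with hf
  have dA : ∀ i : ℕ, Odd (partSeq p i - partSeq p (i + 1)) → 2 ∣ f i := by
    intro i hdi
    have h := int_two_dvd_ringChoose (((i : ℤ) + 1) * χ) hdi
    simpa [hf, mul_assoc] using h
  set T := (Finset.range a).filter
    (fun i => Odd (partSeq p i - partSeq p (i + 1))) with hT
  show 4 ∣ ∏ i ∈ Finset.range a, f i
  rcases Nat.lt_or_ge T.card 2 with hc | hc
  swap
  · obtain ⟨i, hi, j, hj, hij⟩ := Finset.one_lt_card.mp hc
    have hiR : i ∈ Finset.range a := (Finset.mem_filter.mp hi).1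
    have hjR : j ∈ (Finset.range a).erase i :=
      Finset.mem_erase.mpr ⟨hij.symm, (Finset.mem_filter.mp hj).1⟩
    have key : ∏ k ∈ Finset.range a, f k
        = f i * (f j * ∏ k ∈ ((Finset.range a).erase i).erase j, f k) := by
      rw [Finset.mul_prod_erase _ _ hjR, Finset.mul_prod_erase _ _ hiR]
    rw [key, ← mul_assoc]
    apply dvd_mul_of_dvd_left
    have h4 : (4 : ℤ) = 2 * 2 := by norm_num
    rw [h4]
    exact mul_dvd_mul (dA i (Finset.mem_filter.mp hi).2) (dA j (Finset.mem_filter.mp hj).2)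
  · have hTne : T.Nonempty := by
      by_contra hne
      rw [Finset.not_nonempty_iff_eq_empty] at hne
      obtain ⟨x, hx, hxodd⟩ := hodd
      obtain ⟨i, hia, hqi⟩ := partSeq_mem p hx
      have hev : Even x := by
        rw [← hqi, partSeq_telescope p (le_of_lt hia)]
        apply Finset.even_sum
        intro j hj
        rw [← Nat.not_odd_iff_even]
        intro hodd'
        have hjT : j ∈ T := Finset.mem_filter.mpr
          ⟨Finset.mem_range.mpr (Finset.mem_Ico.mp hj).2, hodd'⟩
        simp [hne] at hjT
      exact (Nat.not_even_iff_odd.mpr hxodd) hev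
    have hc1 : T.card = 1 := by
      have := Finset.card_pos.mpr hTne
      omega
    obtain ⟨t, hTt⟩ := Finset.card_eq_one.mp hc1
    have htT : t ∈ T := hTt ▸ Finset.mem_singleton_self t
    have hta : t < a := Finset.mem_range.mp (Finset.mem_filter.mp htT).1
    have htodd : Odd (partSeq p t - partSeq p (t + 1)) := (Finset.mem_filter.mp htT).2
    have hEO : ∀ i, i < a → (Odd (partSeq p i) ↔ i ≤ t) := by
      intro i hia
      rw [partSeq_telescope p (le_of_lt hia), Finset.odd_sum_iff_odd_card_odd]
      have hfil : (Finset.Ico i a).filter (fun j => Odd (partSeq p j - partSeq p (j + 1)))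
          = if i ≤ t then ({t} : Finset ℕ) else ∅ := by
        ext j
        simp only [Finset.mem_filter, Finset.mem_Ico]
        constructor
        · rintro ⟨⟨h1, h2⟩, h3⟩
          have hjT : j ∈ T := Finset.mem_filter.mpr ⟨Finset.mem_range.mpr h2, h3⟩
          rw [hTt, Finset.mem_singleton] at hjT
          subst hjT
          rw [if_pos h1]
          exact Finset.mem_singleton_self _
        · intro hj
          by_cases hit : i ≤ t
          · rw [if_pos hit, Finset.mem_singleton] at hj
            subst hj
            exact ⟨⟨hit, hta⟩, htodd⟩
          · rw [if_neg hit] at hj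
            exact absurd hj (Finset.notMem_empty _)
      rw [hfil]
      by_cases hit : i ≤ t
      · simp [hit]
      · simp [hit]
    have hOcard : Even (t + 1) := by
      have hsum : Even (∑ i ∈ Finset.range a, partSeq p i) := by
        rw [partSeq_sum p]
        obtain ⟨k, hk⟩ := ha2; exact ⟨k, by omega⟩
      rw [Finset.even_sum_iff_even_card_odd] at hsum
      have hset : (Finset.range a).filter (fun i => Odd (partSeq p i))
          = Finset.range (t + 1) := by
        ext i
        simp only [Finset.mem_filter, Finset.mem_range]
        constructor
        · rintro ⟨h1, h2⟩
          exact Nat.lt_succ_of_le ((hEO i h1).mp h2)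
        · intro h
          have hit : i ≤ t := Nat.lt_succ_iff.mp h
          have hia : i < a := lt_of_le_of_lt hit hta
          exact ⟨hia, (hEO i hia).mpr hit⟩
      rw [hset, Finset.card_range] at hsum
      exact hsum
    obtain ⟨s, hs⟩ := hOcard
    have h4 : 4 ∣ f t := by
      have h := int_four_dvd_ringChoose ((s : ℤ) * χ) htodd
      have harg : 4 * ((s : ℤ) * χ) - 1 + ((partSeq p t - partSeq p (t + 1) : ℕ) : ℤ)
          = 2 * ((t : ℤ) + 1) * χ - 1 + ((partSeq p t - partSeq p (t + 1) : ℕ) : ℤ) := by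
        have hts : (t : ℤ) + 1 = 2 * (s : ℤ) := by
          have : t + 1 = s + s := hs
          omega
        rw [hts]; ring
      rw [harg] at h
      exact h
    exact dvd_trans h4 (Finset.dvd_prod_of_mem f (Finset.mem_range.mpr hta))
end
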